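/- arXiv:2006.03357 — 3 statements merged into one kernel-verified Lean document; each statement's English description precedes it below -/
import Mathlib

section
/- Cumulative information gain is bounded by prior entropy: Under Mentee's setup with w(μ) > 0, w(π^h) > 0 and a finite-entropy prior w, for every m ∈ ℕ and every offset i ∈ {0, …, m−1}, the expected total information gain over the disjoint blocks of length m starting at times t ∈ mℕ + i, under the measure in which exploit-step actions follow π*, explore-step actions follow the mixture π̄, and percepts follow the mixture ξ, satisfies ∑_{t ∈ mℕ+i} E[ IG(h_{t:t+m−1} | h_{<t}) ] ≤ Ent(w), where Ent(w) is the entropy of the prior w over environment–policy pairs. -/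
open MeasureTheory Filter Topology ENNReal
open scoped Classical

namespace Mentee

/-- Interactions: an exploration flag (true iff the mentor chose the action), an action,
an observation, and a reward. -/
abbrev MInter (A O R : Type) := Bool × A × O × R
/-- Finite interaction histories. -/
abbrev MHist (A O R : Type) := List (MInter A O R)
/-- Infinite interaction histories. -/
abbrev MInf (A O R : Type) := ℕ → MInter A O R
/-- A (stochastic) policy, as a nonnegative kernel over actions. -/
abbrev MPolicy (A O R : Type) := MHist A O R → A → ℝ≥0∞
/-- An environment, as a nonnegative kernel over percepts. -/
abbrev MEnv (A O R : Type) := MHist A O R → A → O × R → ℝ≥0∞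

variable {A O R ι κ : Type}

/-- `π` is a genuine probability distribution over actions at each history. -/
def IsMPolicy (π : MPolicy A O R) : Prop := ∀ h, ∑' a : A, π h a = 1

/-- `ν` is a genuine probability distribution over percepts at each history-action pair. -/
def IsMEnv (ν : MEnv A O R) : Prop := ∀ h a, ∑' p : O × R, ν h a p = 1

/-- Likelihood of the percepts in `h` according to the environment `ν`. -/
noncomputable def envLik (ν : MEnv A O R) (h : MHist A O R) : ℝ≥0∞ :=
  ∏ k : Fin h.length, ν (h.take k.1) (h.get k).2.1 (h.get k).2.2

/-- Likelihood of the mentor-chosen actions in `h` according to the policy `π`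
(only timesteps with `e_k = 1` contribute). -/
noncomputable def polLik (π : MPolicy A O R) (h : MHist A O R) : ℝ≥0∞ :=
  ∏ k : Fin h.length, if (h.get k).1 = true then π (h.take k.1) (h.get k).2.1 else 1

/-- Posterior weight of the environment `νs i`:
`w(ν | h) ∝ w(ν) ∏_{k<t} ν(o_k r_k | h_{<k} a_k)`. -/
noncomputable def postE (wE : ι → ℝ≥0∞) (νs : ι → MEnv A O R)
    (h : MHist A O R) (i : ι) : ℝ≥0∞ :=
  wE i * envLik (νs i) h / ∑' i' : ι, wE i' * envLik (νs i') h

/-- Posterior weight of the policy `πs j`: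
`w(π | h) ∝ w(π) ∏_{k<t : e_k=1} π(a_k | h_{<k})`. -/
noncomputable def postP (wP : κ → ℝ≥0∞) (πs : κ → MPolicy A O R)
    (h : MHist A O R) (j : κ) : ℝ≥0∞ :=
  wP j * polLik (πs j) h / ∑' j' : κ, wP j' * polLik (πs j') h

/-- The Bayes-mixture environment `ξ`. -/
noncomputable def xi (wE : ι → ℝ≥0∞) (νs : ι → MEnv A O R) : MEnv A O R :=
  fun h a p => ∑' i : ι, postE wE νs h i * νs i h a p

/-- The Bayes-mixture policy `π̄`. -/
noncomputable def pibar (wP : κ → ℝ≥0∞) (πs : κ → MPolicy A O R) : MPolicy A O R :=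
  fun h a => ∑' j : κ, postP wP πs h j * πs j h a

/-- Information gain of the history fragment `h'` following `h`: the KL divergence from
the posterior after `h ++ h'` to the posterior after `h`. -/
noncomputable def IG (wE : ι → ℝ≥0∞) (νs : ι → MEnv A O R)
    (wP : κ → ℝ≥0∞) (πs : κ → MPolicy A O R) (h h' : MHist A O R) : ℝ :=
  ∑' (i : ι) (j : κ),
    (postE wE νs (h ++ h') i * postP wP πs (h ++ h') j).toReal *
      Real.log ((postE wE νs (h ++ h') i * postP wP πs (h ++ h') j).toReal /
        (postE wE νs h i * postP wP πs h j).toReal)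

/-- Embed an `(a, o, r)` fragment as mentor-chosen interactions (`e = 1` throughout). -/
def toFrag (f : List (A × O × R)) : MHist A O R := f.map fun x => (true, x)

/-- Conditional probability `P^π_ν(f | h)` of the fragment `f` following the history `h`,
with actions sampled from `π` and percepts from `ν`. -/
noncomputable def fragProb (π : MPolicy A O R) (ν : MEnv A O R)
    (h f : MHist A O R) : ℝ≥0∞ :=
  ∏ k : Fin f.length,
    π (h ++ f.take k.1) (f.get k).2.1 * ν (h ++ f.take k.1) (f.get k).2.1 (f.get k).2.2

/-- The information gain value `V^{IG}_{m,0}(h)`: the expected information gain of the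
next `m` timesteps when actions are sampled from the mixture `π̄` and percepts from the
mixture `ξ`, conditioned on all of them being exploratory (`e = 1^m`). -/
noncomputable def VIG (wE : ι → ℝ≥0∞) (νs : ι → MEnv A O R)
    (wP : κ → ℝ≥0∞) (πs : κ → MPolicy A O R) (m : ℕ) (h : MHist A O R) : ℝ :=
  ∑' f : Fin m → A × O × R,
    (fragProb (pibar wP πs) (xi wE νs) h (toFrag (List.ofFn f))).toReal *
      IG wE νs wP πs h (toFrag (List.ofFn f))

/-- A summand `ρ(h_{<t}, m, k)` of the exploration probability; note
`V^{IG}_{m,k}(h_{<t}) = V^{IG}_{m,0}(h_{<t-k})`. -/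
noncomputable def rho (wE : ι → ℝ≥0∞) (νs : ι → MEnv A O R)
    (wP : κ → ℝ≥0∞) (πs : κ → MPolicy A O R) (η : ℝ)
    (h : MHist A O R) (m k : ℕ) : ℝ :=
  (1 / ((m : ℝ)^2 * (m + 1))) *
    min 1 ((η / m) * VIG wE νs wP πs m (h.take (h.length - k)))

/-- Mentee's exploration probability
`β(h_{<t}) = ∑_{m≥1} ∑_{k=0}^{min{m-1,t}} (1/(m²(m+1))) min{1, (η/m) V^{IG}_{m,k}(h_{<t})}`. -/
noncomputable def expProb (wE : ι → ℝ≥0∞) (νs : ι → MEnv A O R)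
    (wP : κ → ℝ≥0∞) (πs : κ → MPolicy A O R) (η : ℝ) (h : MHist A O R) : ℝ :=
  ∑' m : ℕ, ∑ k ∈ Finset.range (min m (h.length + 1)), rho wE νs wP πs η h m k

/-- `Γ_t = ∑_{k ≥ t} γ_k`. -/
noncomputable def Gam (γ : ℕ → ℝ) (t : ℕ) : ℝ := ∑' k : ℕ, γ (t + k)

/-- The value `V^π_ν(h) = (1/Γ_t) E^π_ν[∑_{k ≥ t} γ_k r_k | h]`, `t = |h|`. -/
noncomputable def mval (γ : ℕ → ℝ) (rval : R → ℝ) (π : MPolicy A O R) (ν : MEnv A O R)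
    (h : MHist A O R) : ℝ :=
  (Gam γ h.length)⁻¹ * ∑' n : ℕ, γ (h.length + n) *
    ∑' f : Fin (n + 1) → A × O × R,
      (fragProb π ν h (toFrag (List.ofFn f))).toReal * rval (f (Fin.last n)).2.2

/-- Mentee's policy `π^M = β π^h + (1 - β) π^*`. -/
noncomputable def piM (wE : ι → ℝ≥0∞) (νs : ι → MEnv A O R)
    (wP : κ → ℝ≥0∞) (πs : κ → MPolicy A O R) (η : ℝ)
    (πh πstar : MPolicy A O R) : MPolicy A O R :=
  fun h a => ENNReal.ofReal (expProb wE νs wP πs η h) * πh h a +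
    ENNReal.ofReal (1 - expProb wE νs wP πs η h) * πstar h a

/-- One-step transition probability: `e_t ~ Bernoulli(β(h))`, the action is sampled from
`πe` if `e_t = 1` and from `πx` if `e_t = 0`, and the percept is sampled from `ν`. -/
noncomputable def stepProb (β : MHist A O R → ℝ) (πe πx : MPolicy A O R) (ν : MEnv A O R)
    (h : MHist A O R) (x : MInter A O R) : ℝ≥0∞ :=
  (if x.1 = true then ENNReal.ofReal (β h) else ENNReal.ofReal (1 - β h)) *
    (if x.1 = true then πe h x.2.1 else πx h x.2.1) * ν h x.2.1 x.2.2

/-- Probability of producing exactly the finite history `h`. -/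
noncomputable def mFinProb (β : MHist A O R → ℝ) (πe πx : MPolicy A O R) (ν : MEnv A O R)
    (h : MHist A O R) : ℝ≥0∞ :=
  ∏ k : Fin h.length, stepProb β πe πx ν (h.take k.1) (h.get k)

/-- The cylinder set of infinite histories extending `h`. -/
def mcyl (h : MHist A O R) : Set (MInf A O R) := {ω | ∀ k : Fin h.length, ω k.1 = h.get k}

/-- The finite history formed by the first `t` interactions of `ω` (i.e. `h_{<t}`). -/
def mhist (ω : MInf A O R) (t : ℕ) : MHist A O R := List.ofFn fun k : Fin t => ω k.1

/-- `P` is the measure on infinite histories induced by exploration probability `β`,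
explore-policy `πe`, exploit-policy `πx` and environment `ν`. -/
def IsMInduced [MeasurableSpace A] [MeasurableSpace O] [MeasurableSpace R]
    (P : Measure (MInf A O R)) (β : MHist A O R → ℝ)
    (πe πx : MPolicy A O R) (ν : MEnv A O R) : Prop :=
  IsProbabilityMeasure P ∧ ∀ h : MHist A O R, P (mcyl h) = mFinProb β πe πx ν h

/-- The entropy `Ent(w) = ∑_{ν,π} w(ν,π) log(1/w(ν,π))` of the prior. -/
noncomputable def priorEnt (wE : ι → ℝ≥0∞) (wP : κ → ℝ≥0∞) : ℝ :=
  ∑' (i : ι) (j : κ), (wE i * wP j).toReal * Real.log (1 / (wE i * wP j).toReal)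

/-- The prior has finite entropy. -/
def FiniteEntropy (wE : ι → ℝ≥0∞) (wP : κ → ℝ≥0∞) : Prop :=
  Summable fun p : ι × κ =>
    (wE p.1 * wP p.2).toReal * Real.log (1 / (wE p.1 * wP p.2).toReal)

section Aux
variable {A O R ι κ : Type}


noncomputable def prodTake (F : MHist A O R → MInter A O R → ℝ≥0∞) (h : MHist A O R) : ℝ≥0∞ :=
  ∏ k : Fin h.length, F (h.take k.1) (h.get k)

lemma prodTake_nil (F : MHist A O R → MInter A O R → ℝ≥0∞) : prodTake F [] = 1 := by
  simp [prodTake]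

lemma prodTake_eq_range (F : MHist A O R → MInter A O R → ℝ≥0∞) (h : MHist A O R) :
    prodTake F h = ∏ k ∈ Finset.range h.length,
      (if hk : k < h.length then F (h.take k) (h.get ⟨k, hk⟩) else 1) := by
  rw [prodTake, ← Fin.prod_univ_eq_prod_range]
  exact Finset.prod_congr rfl fun k _ => by simp [k.2]

lemma prodTake_concat (F : MHist A O R → MInter A O R → ℝ≥0∞) (h : MHist A O R)
    (x : MInter A O R) : prodTake F (h ++ [x]) = prodTake F h * F h x := by
  rw [prodTake_eq_range, prodTake_eq_range]
  have hlen : (h ++ [x]).length = h.length + 1 := by simp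
  simp only [hlen]
  rw [Finset.prod_range_succ]
  congr 1
  · refine Finset.prod_congr rfl fun k hk => ?_
    rw [Finset.mem_range] at hk
    rw [dif_pos (by omega : k < h.length + 1), dif_pos hk]
    congr 1
    · exact List.take_append_of_le_length (by omega)
    · simp only [List.get_eq_getElem]
      exact List.getElem_append_left hk
  · rw [dif_pos (Nat.lt_succ_self h.length)]
    congr 1
    · exact List.take_left
    · simp only [List.get_eq_getElem]
      exact List.getElem_concat_length rfl _

lemma prodTake_append (F : MHist A O R → MInter A O R → ℝ≥0∞) (g l : MHist A O R) :
    prodTake F (g ++ l) = prodTake F g * prodTake (fun h' x => F (g ++ h') x) l := by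
  induction l using List.reverseRecOn with
  | nil => simp [prodTake_nil]
  | append_singleton l x ih =>
      rw [← List.append_assoc, prodTake_concat, ih, prodTake_concat, mul_assoc]


/-! ### Likelihoods as `prodTake` -/

lemma envLik_def' (ν : MEnv A O R) (h : MHist A O R) :
    envLik ν h = prodTake (fun g y => ν g y.2.1 y.2.2) h := rfl

lemma polLik_def' (π : MPolicy A O R) (h : MHist A O R) :
    polLik π h = prodTake (fun g y => if y.1 = true then π g y.2.1 else 1) h := rfl

lemma mFinProb_def' (β : MHist A O R → ℝ) (πe πx : MPolicy A O R) (ν : MEnv A O R)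
    (h : MHist A O R) : mFinProb β πe πx ν h = prodTake (stepProb β πe πx ν) h := rfl

lemma envLik_nil (ν : MEnv A O R) : envLik ν [] = 1 := by
  rw [envLik_def']; exact prodTake_nil _

lemma envLik_concat (ν : MEnv A O R) (h : MHist A O R) (x : MInter A O R) :
    envLik ν (h ++ [x]) = envLik ν h * ν h x.2.1 x.2.2 := by
  rw [envLik_def', envLik_def', prodTake_concat]

lemma polLik_nil (π : MPolicy A O R) : polLik π [] = 1 := by
  rw [polLik_def']; exact prodTake_nil _

lemma polLik_concat (π : MPolicy A O R) (h : MHist A O R) (x : MInter A O R) :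
    polLik π (h ++ [x]) = polLik π h * (if x.1 = true then π h x.2.1 else 1) := by
  rw [polLik_def', polLik_def', prodTake_concat]

lemma mFinProb_nil (β : MHist A O R → ℝ) (πe πx : MPolicy A O R) (ν : MEnv A O R) :
    mFinProb β πe πx ν [] = 1 := by
  rw [mFinProb_def']; exact prodTake_nil _

lemma mFinProb_concat (β : MHist A O R → ℝ) (πe πx : MPolicy A O R) (ν : MEnv A O R)
    (h : MHist A O R) (x : MInter A O R) :
    mFinProb β πe πx ν (h ++ [x]) = mFinProb β πe πx ν h * stepProb β πe πx ν h x := by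
  rw [mFinProb_def', mFinProb_def', prodTake_concat]

lemma prodTake_le_one {F : MHist A O R → MInter A O R → ℝ≥0∞}
    (hF : ∀ g y, F g y ≤ 1) (h : MHist A O R) : prodTake F h ≤ 1 :=
  Finset.prod_le_one (fun _ _ => zero_le) (fun k _ => hF _ _)

lemma env_le_one {ν : MEnv A O R} (hν : IsMEnv ν) (g : MHist A O R) (a : A) (p : O × R) :
    ν g a p ≤ 1 := le_of_le_of_eq (ENNReal.le_tsum p) (hν g a)

lemma pol_le_one {π : MPolicy A O R} (hπ : IsMPolicy π) (g : MHist A O R) (a : A) :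
    π g a ≤ 1 := le_of_le_of_eq (ENNReal.le_tsum a) (hπ g)

lemma envLik_le_one {ν : MEnv A O R} (hν : IsMEnv ν) (h : MHist A O R) : envLik ν h ≤ 1 := by
  rw [envLik_def']; exact prodTake_le_one (fun g y => env_le_one hν g y.2.1 y.2.2) h

lemma polLik_le_one {π : MPolicy A O R} (hπ : IsMPolicy π) (h : MHist A O R) : polLik π h ≤ 1 := by
  rw [polLik_def']; exact prodTake_le_one (fun g y => by split <;> simp [pol_le_one hπ]) h

/-! ### Mixture likelihood normalizers -/

noncomputable def ZEn (wE : ι → ℝ≥0∞) (νs : ι → MEnv A O R) (h : MHist A O R) : ℝ≥0∞ :=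
  ∑' i, wE i * envLik (νs i) h

noncomputable def ZPn (wP : κ → ℝ≥0∞) (πs : κ → MPolicy A O R) (h : MHist A O R) : ℝ≥0∞ :=
  ∑' j, wP j * polLik (πs j) h

variable {wE : ι → ℝ≥0∞} {wP : κ → ℝ≥0∞} {νs : ι → MEnv A O R} {πs : κ → MPolicy A O R}

lemma postE_def (h : MHist A O R) (i : ι) :
    postE wE νs h i = wE i * envLik (νs i) h / ZEn wE νs h := rfl

lemma postP_def (h : MHist A O R) (j : κ) :
    postP wP πs h j = wP j * polLik (πs j) h / ZPn wP πs h := rfl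

lemma ZEn_le_one (hwE : ∑' i, wE i = 1) (hνs : ∀ i, IsMEnv (νs i)) (h : MHist A O R) :
    ZEn wE νs h ≤ 1 := by
  refine le_of_le_of_eq (ENNReal.tsum_le_tsum fun i => ?_) hwE
  exact (mul_le_mul_right (envLik_le_one (hνs i) h) _).trans_eq (mul_one _)

lemma ZPn_le_one (hwP : ∑' j, wP j = 1) (hπs : ∀ j, IsMPolicy (πs j)) (h : MHist A O R) :
    ZPn wP πs h ≤ 1 := by
  refine le_of_le_of_eq (ENNReal.tsum_le_tsum fun j => ?_) hwP
  exact (mul_le_mul_right (polLik_le_one (hπs j) h) _).trans_eq (mul_one _)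

lemma wenv_eq_zero (h : MHist A O R) (h0 : ZEn wE νs h = 0) (i : ι) :
    wE i * envLik (νs i) h = 0 := ENNReal.tsum_eq_zero.mp h0 i

lemma wpol_eq_zero (h : MHist A O R) (h0 : ZPn wP πs h = 0) (j : κ) :
    wP j * polLik (πs j) h = 0 := ENNReal.tsum_eq_zero.mp h0 j

lemma postE_zero_of (h : MHist A O R) (h0 : ZEn wE νs h = 0) (i : ι) :
    postE wE νs h i = 0 := by
  rw [postE_def, wenv_eq_zero h h0 i, ENNReal.zero_div]

lemma postP_zero_of (h : MHist A O R) (h0 : ZPn wP πs h = 0) (j : κ) :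
    postP wP πs h j = 0 := by
  rw [postP_def, wpol_eq_zero h h0 j, ENNReal.zero_div]

lemma tsum_postE (h : MHist A O R) (h0 : ZEn wE νs h ≠ 0) (hfin : ZEn wE νs h ≠ ⊤) :
    ∑' i, postE wE νs h i = 1 := by
  simp_rw [postE_def, div_eq_mul_inv, ENNReal.tsum_mul_right]
  exact ENNReal.mul_inv_cancel h0 hfin

lemma tsum_postP (h : MHist A O R) (h0 : ZPn wP πs h ≠ 0) (hfin : ZPn wP πs h ≠ ⊤) :
    ∑' j, postP wP πs h j = 1 := by
  simp_rw [postP_def, div_eq_mul_inv, ENNReal.tsum_mul_right]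
  exact ENNReal.mul_inv_cancel h0 hfin

lemma tsum_postE_le_one (h : MHist A O R) (hfin : ZEn wE νs h ≠ ⊤) :
    ∑' i, postE wE νs h i ≤ 1 := by
  by_cases h0 : ZEn wE νs h = 0
  · simp [postE_zero_of h h0]
  · exact (tsum_postE h h0 hfin).le

lemma tsum_postP_le_one (h : MHist A O R) (hfin : ZPn wP πs h ≠ ⊤) :
    ∑' j, postP wP πs h j ≤ 1 := by
  by_cases h0 : ZPn wP πs h = 0
  · simp [postP_zero_of h h0]
  · exact (tsum_postP h h0 hfin).le

lemma ZEn_concat (h : MHist A O R) (x : MInter A O R) :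
    ZEn wE νs (h ++ [x]) = ∑' i, wE i * envLik (νs i) h * νs i h x.2.1 x.2.2 := by
  simp_rw [ZEn, envLik_concat, mul_assoc]

lemma envLik_xi (hwE : ∑' i, wE i = 1) (hνs : ∀ i, IsMEnv (νs i)) (h : MHist A O R) :
    envLik (xi wE νs) h = ZEn wE νs h := by
  induction h using List.reverseRecOn with
  | nil => simp [envLik_nil, ZEn, hwE]
  | append_singleton h x ih =>
    rw [envLik_concat, ih, ZEn_concat]
    by_cases h0 : ZEn wE νs h = 0
    · rw [h0, zero_mul]
      refine (ENNReal.tsum_eq_zero.mpr fun i => ?_).symm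
      rw [wenv_eq_zero h h0 i, zero_mul]
    · have hfin : ZEn wE νs h ≠ ⊤ :=
        ((ZEn_le_one hwE hνs h).trans_lt ENNReal.one_lt_top).ne
      have hxi : xi wE νs h x.2.1 x.2.2
          = (∑' i, wE i * envLik (νs i) h * νs i h x.2.1 x.2.2) * (ZEn wE νs h)⁻¹ := by
        rw [xi, ← ENNReal.tsum_mul_right]
        refine tsum_congr fun i => ?_
        rw [postE_def, div_eq_mul_inv]; ring
      rw [hxi, ← mul_assoc, mul_comm (ZEn wE νs h), mul_assoc,
        ENNReal.mul_inv_cancel h0 hfin, mul_one]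

lemma ZPn_concat (h : MHist A O R) (x : MInter A O R) :
    ZPn wP πs (h ++ [x]) = ∑' j, wP j * polLik (πs j) h * (if x.1 = true then πs j h x.2.1 else 1) := by
  simp_rw [ZPn, polLik_concat, mul_assoc]

lemma polLik_pibar (hwP : ∑' j, wP j = 1) (hπs : ∀ j, IsMPolicy (πs j)) (h : MHist A O R) :
    polLik (pibar wP πs) h = ZPn wP πs h := by
  induction h using List.reverseRecOn with
  | nil => simp [polLik_nil, ZPn, hwP]
  | append_singleton h x ih =>
    rw [polLik_concat, ih, ZPn_concat]
    by_cases hx : x.1 = true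
    · simp only [if_pos hx]
      by_cases h0 : ZPn wP πs h = 0
      · rw [h0, zero_mul]
        refine (ENNReal.tsum_eq_zero.mpr fun j => ?_).symm
        rw [wpol_eq_zero h h0 j, zero_mul]
      · have hfin : ZPn wP πs h ≠ ⊤ :=
          ((ZPn_le_one hwP hπs h).trans_lt ENNReal.one_lt_top).ne
        have hpi : pibar wP πs h x.2.1
            = (∑' j, wP j * polLik (πs j) h * πs j h x.2.1) * (ZPn wP πs h)⁻¹ := by
          rw [pibar, ← ENNReal.tsum_mul_right]
          refine tsum_congr fun j => ?_
          rw [postP_def, div_eq_mul_inv]; ring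
        rw [hpi, ← mul_assoc, mul_comm (ZPn wP πs h), mul_assoc,
          ENNReal.mul_inv_cancel h0 hfin, mul_one]
    · simp only [if_neg hx, mul_one]
      rfl

/-! ### Factorization of `mFinProb` -/

noncomputable def bxprod (β : MHist A O R → ℝ) (πx : MPolicy A O R) (h : MHist A O R) : ℝ≥0∞ :=
  prodTake (fun g y => (if y.1 = true then ENNReal.ofReal (β g) else ENNReal.ofReal (1 - β g)) *
    (if y.1 = true then (1:ℝ≥0∞) else πx g y.2.1)) h

lemma stepProb_factor (β : MHist A O R → ℝ) (πe πx : MPolicy A O R) (ν : MEnv A O R)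
    (g : MHist A O R) (x : MInter A O R) :
    stepProb β πe πx ν g x =
      ((if x.1 = true then ENNReal.ofReal (β g) else ENNReal.ofReal (1 - β g)) *
        (if x.1 = true then (1:ℝ≥0∞) else πx g x.2.1)) *
      ((if x.1 = true then πe g x.2.1 else 1) * ν g x.2.1 x.2.2) := by
  obtain ⟨e, a, o, r⟩ := x
  cases e <;> simp [stepProb] <;> ring

lemma bxprod_concat (β : MHist A O R → ℝ) (πx : MPolicy A O R) (h : MHist A O R)
    (x : MInter A O R) :
    bxprod β πx (h ++ [x]) = bxprod β πx h *
      ((if x.1 = true then ENNReal.ofReal (β h) else ENNReal.ofReal (1 - β h)) *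
        (if x.1 = true then (1:ℝ≥0∞) else πx h x.2.1)) := prodTake_concat _ h x

lemma mFinProb_factor (β : MHist A O R → ℝ) (πe πx : MPolicy A O R) (ν : MEnv A O R)
    (h : MHist A O R) :
    mFinProb β πe πx ν h = bxprod β πx h * (polLik πe h * envLik ν h) := by
  induction h using List.reverseRecOn with
  | nil => simp [mFinProb_nil, bxprod, prodTake_nil, polLik_nil, envLik_nil]
  | append_singleton h x ih =>
    rw [mFinProb_concat, ih, bxprod_concat, polLik_concat, envLik_concat, stepProb_factor]
    ring

variable {β : MHist A O R → ℝ} {πstar : MPolicy A O R}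

lemma Q_factor (hwE : ∑' i, wE i = 1) (hνs : ∀ i, IsMEnv (νs i))
    (hwP : ∑' j, wP j = 1) (hπs : ∀ j, IsMPolicy (πs j)) (h : MHist A O R) :
    mFinProb β (pibar wP πs) πstar (xi wE νs) h
      = bxprod β πstar h * (ZPn wP πs h * ZEn wE νs h) := by
  rw [mFinProb_factor, polLik_pibar hwP hπs, envLik_xi hwE hνs]

lemma Q_ZEn_ne_zero (hwE : ∑' i, wE i = 1) (hνs : ∀ i, IsMEnv (νs i))
    (hwP : ∑' j, wP j = 1) (hπs : ∀ j, IsMPolicy (πs j)) {h : MHist A O R}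
    (hQ : mFinProb β (pibar wP πs) πstar (xi wE νs) h ≠ 0) :
    ZEn wE νs h ≠ 0 ∧ ZPn wP πs h ≠ 0 := by
  rw [Q_factor hwE hνs hwP hπs] at hQ
  refine ⟨fun h0 => hQ ?_, fun h0 => hQ ?_⟩ <;> rw [h0] <;> simp

/-! ### Bayes identity -/

lemma bayes (hwE : ∑' i, wE i = 1) (hνs : ∀ i, IsMEnv (νs i))
    (hwP : ∑' j, wP j = 1) (hπs : ∀ j, IsMPolicy (πs j)) (i : ι) (j : κ) (h : MHist A O R) :
    wE i * wP j * mFinProb β (πs j) πstar (νs i) h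
      = mFinProb β (pibar wP πs) πstar (xi wE νs) h * (postE wE νs h i * postP wP πs h j) := by
  rw [Q_factor hwE hνs hwP hπs, mFinProb_factor]
  by_cases hE : ZEn wE νs h = 0
  · rw [postE_zero_of h hE, zero_mul, mul_zero]
    have h1 : wE i * envLik (νs i) h = 0 := wenv_eq_zero h hE i
    calc wE i * wP j * (bxprod β πstar h * (polLik (πs j) h * envLik (νs i) h))
        = wE i * envLik (νs i) h * (wP j * (bxprod β πstar h * polLik (πs j) h)) := by ring
      _ = 0 := by rw [h1, zero_mul]
  · by_cases hP : ZPn wP πs h = 0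
    · rw [postP_zero_of h hP, mul_zero, mul_zero]
      have h1 : wP j * polLik (πs j) h = 0 := wpol_eq_zero h hP j
      calc wE i * wP j * (bxprod β πstar h * (polLik (πs j) h * envLik (νs i) h))
          = wP j * polLik (πs j) h * (wE i * (bxprod β πstar h * envLik (νs i) h)) := by ring
        _ = 0 := by rw [h1, zero_mul]
    · have hEfin : ZEn wE νs h ≠ ⊤ := ((ZEn_le_one hwE hνs h).trans_lt ENNReal.one_lt_top).ne
      have hPfin : ZPn wP πs h ≠ ⊤ := ((ZPn_le_one hwP hπs h).trans_lt ENNReal.one_lt_top).ne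
      have c1 : ZEn wE νs h * (ZEn wE νs h)⁻¹ = 1 := ENNReal.mul_inv_cancel hE hEfin
      have c2 : ZPn wP πs h * (ZPn wP πs h)⁻¹ = 1 := ENNReal.mul_inv_cancel hP hPfin
      rw [postE_def, postP_def, div_eq_mul_inv, div_eq_mul_inv]
      calc wE i * wP j * (bxprod β πstar h * (polLik (πs j) h * envLik (νs i) h))
          = wE i * wP j * (bxprod β πstar h * (polLik (πs j) h * envLik (νs i) h)) *
              ((ZEn wE νs h * (ZEn wE νs h)⁻¹) * (ZPn wP πs h * (ZPn wP πs h)⁻¹)) := by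
            rw [c1, c2, one_mul, mul_one]
        _ = bxprod β πstar h * (ZPn wP πs h * ZEn wE νs h) *
              (wE i * envLik (νs i) h * (ZEn wE νs h)⁻¹ *
                (wP j * polLik (πs j) h * (ZPn wP πs h)⁻¹)) := by ring

/-! ### Bounds and one-step sums -/

lemma pibar_le_one (hwP : ∑' j, wP j = 1) (hπs : ∀ j, IsMPolicy (πs j))
    (h : MHist A O R) (a : A) : pibar wP πs h a ≤ 1 := by
  have hPfin : ZPn wP πs h ≠ ⊤ := ((ZPn_le_one hwP hπs h).trans_lt ENNReal.one_lt_top).ne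
  calc pibar wP πs h a ≤ ∑' j, postP wP πs h j :=
        ENNReal.tsum_le_tsum fun j =>
          (mul_le_mul_right (pol_le_one (hπs j) h a) _).trans_eq (mul_one _)
    _ ≤ 1 := tsum_postP_le_one h hPfin

lemma xi_le_one (hwE : ∑' i, wE i = 1) (hνs : ∀ i, IsMEnv (νs i))
    (h : MHist A O R) (a : A) (p : O × R) : xi wE νs h a p ≤ 1 := by
  have hEfin : ZEn wE νs h ≠ ⊤ := ((ZEn_le_one hwE hνs h).trans_lt ENNReal.one_lt_top).ne
  calc xi wE νs h a p ≤ ∑' i, postE wE νs h i :=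
        ENNReal.tsum_le_tsum fun i =>
          (mul_le_mul_right (env_le_one (hνs i) h a p) _).trans_eq (mul_one _)
    _ ≤ 1 := tsum_postE_le_one h hEfin

lemma stepProb_le_one {πe πx : MPolicy A O R} {ν : MEnv A O R}
    (hβ01 : ∀ g, β g ∈ Set.Icc (0:ℝ) 1) (hπe : ∀ g a, πe g a ≤ 1) (hπx : ∀ g a, πx g a ≤ 1)
    (hν : ∀ g a p, ν g a p ≤ 1) (g : MHist A O R) (x : MInter A O R) :
    stepProb β πe πx ν g x ≤ 1 := by
  refine mul_le_one' (mul_le_one' ?_ ?_) (hν _ _ _)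
  · by_cases hx : x.1 = true
    · rw [if_pos hx, ENNReal.ofReal_le_one]; exact (hβ01 g).2
    · rw [if_neg hx, ENNReal.ofReal_le_one]; linarith [(hβ01 g).1]
  · by_cases hx : x.1 = true
    · rw [if_pos hx]; exact hπe _ _
    · rw [if_neg hx]; exact hπx _ _

lemma mFinProb_append_le {πe πx : MPolicy A O R} {ν : MEnv A O R}
    (hstep : ∀ g x, stepProb β πe πx ν g x ≤ 1) (g l : MHist A O R) :
    mFinProb β πe πx ν (g ++ l) ≤ mFinProb β πe πx ν g := by
  induction l using List.reverseRecOn with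
  | nil => simp
  | append_singleton l x ih =>
    rw [← List.append_assoc, mFinProb_concat]
    exact le_trans ((mul_le_mul_right (hstep _ _) _).trans_eq (mul_one _)) ih

lemma tsum_stepProb {πe πx : MPolicy A O R} {ν : MEnv A O R} (h : MHist A O R)
    (hβ01 : β h ∈ Set.Icc (0:ℝ) 1) (hπe : ∑' a, πe h a = 1) (hπx : ∑' a, πx h a = 1)
    (hν : ∀ a, ∑' p : O × R, ν h a p = 1) :
    ∑' x : MInter A O R, stepProb β πe πx ν h x = 1 := by
  rw [ENNReal.tsum_prod', tsum_bool]
  have hfalse : (∑' y : A × O × R, stepProb β πe πx ν h (false, y)) = ENNReal.ofReal (1 - β h) := by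
    rw [ENNReal.tsum_prod']
    simp only [stepProb, if_false, Bool.false_eq_true]
    calc ∑' (a : A) (p : O × R), ENNReal.ofReal (1 - β h) * πx h a * ν h a p
        = ∑' (a : A), ENNReal.ofReal (1 - β h) * πx h a * 1 := by
          refine tsum_congr fun a => ?_
          rw [mul_assoc, ENNReal.tsum_mul_left, hν a]; ring
      _ = ENNReal.ofReal (1 - β h) := by
          simp_rw [mul_one]
          rw [ENNReal.tsum_mul_left, hπx, mul_one]
  have htrue : (∑' y : A × O × R, stepProb β πe πx ν h (true, y)) = ENNReal.ofReal (β h) := by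
    rw [ENNReal.tsum_prod']
    simp only [stepProb, if_true]
    calc ∑' (a : A) (p : O × R), ENNReal.ofReal (β h) * πe h a * ν h a p
        = ∑' (a : A), ENNReal.ofReal (β h) * πe h a * 1 := by
          refine tsum_congr fun a => ?_
          rw [mul_assoc, ENNReal.tsum_mul_left, hν a]; ring
      _ = ENNReal.ofReal (β h) := by
          simp_rw [mul_one]
          rw [ENNReal.tsum_mul_left, hπe, mul_one]
  rw [hfalse, htrue, ← ENNReal.ofReal_add (by linarith [hβ01.2]) hβ01.1]
  norm_num

/-! ### Fragment sums -/

def consE (n : ℕ) : (MInter A O R × (Fin n → MInter A O R)) ≃ (Fin (n+1) → MInter A O R) where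
  toFun p := Fin.cons p.1 p.2
  invFun v := (v 0, fun i => v i.succ)
  left_inv p := by
    refine Prod.ext ?_ ?_
    · simp
    · funext i; simp
  right_inv v := by
    funext k
    refine Fin.cases ?_ (fun i => ?_) k <;> simp

lemma tsum_mFinProb_frag {πe πx : MPolicy A O R} {ν : MEnv A O R}
    (hβ01 : ∀ g, β g ∈ Set.Icc (0:ℝ) 1) (hπe : IsMPolicy πe) (hπx : IsMPolicy πx)
    (hν : IsMEnv ν) (n : ℕ) (h : MHist A O R) :
    ∑' f : Fin n → MInter A O R, mFinProb β πe πx ν (h ++ List.ofFn f)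
      = mFinProb β πe πx ν h := by
  induction n generalizing h with
  | zero =>
    rw [tsum_eq_single (default : Fin 0 → MInter A O R)
      (fun b hb => absurd (Subsingleton.elim b default) hb)]
    simp
  | succ n ih =>
    rw [← Equiv.tsum_eq (consE n), ENNReal.tsum_prod']
    have hinner : ∀ x : MInter A O R,
        (∑' f : Fin n → MInter A O R, mFinProb β πe πx ν (h ++ List.ofFn (consE n (x, f))))
          = mFinProb β πe πx ν h * stepProb β πe πx ν h x := by
      intro x
      have hofn : ∀ f : Fin n → MInter A O R,
          h ++ List.ofFn (consE n (x, f)) = (h ++ [x]) ++ List.ofFn f := by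
        intro f
        have : List.ofFn (consE n (x, f)) = x :: List.ofFn f := by
          simp [consE, List.ofFn_succ]
        rw [this, List.append_cons]
      calc (∑' f : Fin n → MInter A O R, mFinProb β πe πx ν (h ++ List.ofFn (consE n (x, f))))
          = ∑' f : Fin n → MInter A O R, mFinProb β πe πx ν ((h ++ [x]) ++ List.ofFn f) := by
            exact tsum_congr fun f => by rw [hofn f]
        _ = mFinProb β πe πx ν (h ++ [x]) := ih (h ++ [x])
        _ = mFinProb β πe πx ν h * stepProb β πe πx ν h x := mFinProb_concat _ _ _ _ _ _
    calc (∑' (x : MInter A O R) (f : Fin n → MInter A O R),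
            mFinProb β πe πx ν (h ++ List.ofFn (consE n (x, f))))
        = ∑' x : MInter A O R, mFinProb β πe πx ν h * stepProb β πe πx ν h x :=
          tsum_congr hinner
      _ = mFinProb β πe πx ν h := by
          rw [ENNReal.tsum_mul_left, tsum_stepProb h (hβ01 h) (hπe h) (hπx h) (hν h), mul_one]

/-! ### Real logarithm estimates -/

lemma mul_log_div_ge {x w : ℝ} (hx : 0 ≤ x) (hw : 0 < w) : x - w ≤ x * Real.log (x / w) := by
  rcases eq_or_lt_of_le hx with h0 | hx0
  · rw [← h0]; simp only [zero_mul, zero_sub]; linarith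
  · have h1 : Real.log (w / x) ≤ w / x - 1 := Real.log_le_sub_one_of_pos (div_pos hw hx0)
    have h2 : Real.log (x / w) = - Real.log (w / x) := by rw [← Real.log_inv, inv_div]
    have h3 : x * (w / x) = w := by field_simp
    nlinarith [mul_le_mul_of_nonneg_left h1 hx]

lemma abs_mul_log_div_le {x w C : ℝ} (hx : 0 ≤ x) (hw : 0 ≤ w) (hwx : w = 0 → x = 0)
    (hxC : x ≤ w * C) : |x * Real.log (x / w)| ≤ x * max (Real.log C) 0 + w := by
  rcases eq_or_lt_of_le hx with h0 | hx0
  · rw [← h0]; simpa using hw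
  · have hw0 : 0 < w := by
      rcases eq_or_lt_of_le hw with h0' | h; · exact absurd (hwx h0'.symm) (by linarith)
      exact h
    have hC : 0 < C := by nlinarith
    have hdiv : x / w ≤ C := (div_le_iff₀ hw0).mpr (by linarith)
    have hlogle : Real.log (x / w) ≤ max (Real.log C) 0 :=
      le_max_of_le_left (Real.log_le_log (div_pos hx0 hw0) hdiv)
    have hge : x - w ≤ x * Real.log (x / w) := mul_log_div_ge hx hw0
    have hmax : 0 ≤ x * max (Real.log C) 0 := mul_nonneg hx (le_max_right _ _)
    refine abs_le.mpr ⟨by linarith, ?_⟩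
    nlinarith [mul_le_mul_of_nonneg_left hlogle hx]

lemma abs_mul_log_div_le' {x' z p w C : ℝ} (hx' : 0 ≤ x') (hz : 0 < z) (hp : 0 < p)
    (hw : 0 < w) (h1 : x' * z ≤ p) (h2 : p ≤ w * C) :
    |x' * Real.log (p / w)| ≤ x' * (max (Real.log C) 0 + |Real.log z|) + w := by
  have hdiv : p / w ≤ C := (div_le_iff₀ hw).mpr (by linarith)
  have hupper : Real.log (p / w) ≤ max (Real.log C) 0 :=
    le_max_of_le_left (Real.log_le_log (div_pos hp hw) hdiv)
  rcases eq_or_lt_of_le hx' with h0 | hx0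
  · rw [← h0]; simp only [zero_mul, abs_zero, zero_add]; positivity
  · have hl : Real.log (x' * z / w) ≤ Real.log (p / w) :=
      Real.log_le_log (div_pos (mul_pos hx0 hz) hw) (by gcongr)
    have hl' : x' * Real.log (x' * z / w) ≤ x' * Real.log (p / w) :=
      mul_le_mul_of_nonneg_left hl hx'
    have heq : x' * Real.log (x' * z / w) = x' * Real.log (x' / w) + x' * Real.log z := by
      rw [show x' * z / w = (x' / w) * z by ring,
        Real.log_mul (ne_of_gt (div_pos hx0 hw)) (ne_of_gt hz)]
      ring
    have hge : x' - w ≤ x' * Real.log (x' / w) := mul_log_div_ge hx' hw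
    have habs : x' * (-|Real.log z|) ≤ x' * Real.log z :=
      mul_le_mul_of_nonneg_left (neg_abs_le _) hx'
    have hmax : 0 ≤ x' * max (Real.log C) 0 := mul_nonneg hx' (le_max_right _ _)
    have habs0 : 0 ≤ x' * |Real.log z| := mul_nonneg hx' (abs_nonneg _)
    refine abs_le.mpr ⟨by nlinarith, ?_⟩
    nlinarith [mul_le_mul_of_nonneg_left hupper hx']

/-! ### The joint posterior and prior over pairs -/

noncomputable def pmf (wE : ι → ℝ≥0∞) (νs : ι → MEnv A O R) (wP : κ → ℝ≥0∞)
    (πs : κ → MPolicy A O R) (h : MHist A O R) (q : ι × κ) : ℝ≥0∞ :=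
  postE wE νs h q.1 * postP wP πs h q.2

noncomputable def prio (wE : ι → ℝ≥0∞) (wP : κ → ℝ≥0∞) (q : ι × κ) : ℝ≥0∞ := wE q.1 * wP q.2

noncomputable def Dre (wE : ι → ℝ≥0∞) (νs : ι → MEnv A O R) (wP : κ → ℝ≥0∞)
    (πs : κ → MPolicy A O R) (h : MHist A O R) : ℝ :=
  ∑' q : ι × κ, (pmf wE νs wP πs h q).toReal *
    Real.log ((pmf wE νs wP πs h q).toReal / (prio wE wP q).toReal)

lemma postE_le_one (h : MHist A O R) (i : ι) : postE wE νs h i ≤ 1 :=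
  ENNReal.div_le_of_le_mul (by rw [one_mul]; exact ENNReal.le_tsum i)

lemma postP_le_one (h : MHist A O R) (j : κ) : postP wP πs h j ≤ 1 :=
  ENNReal.div_le_of_le_mul (by rw [one_mul]; exact ENNReal.le_tsum j)

lemma pmf_le_one (h : MHist A O R) (q : ι × κ) : pmf wE νs wP πs h q ≤ 1 :=
  mul_le_one' (postE_le_one _ _) (postP_le_one _ _)

lemma pmf_ne_top (h : MHist A O R) (q : ι × κ) : pmf wE νs wP πs h q ≠ ⊤ :=
  ((pmf_le_one h q).trans_lt ENNReal.one_lt_top).ne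

lemma wE_le_one (hwE : ∑' i, wE i = 1) (i : ι) : wE i ≤ 1 :=
  le_of_le_of_eq (ENNReal.le_tsum i) hwE

lemma prio_le_one (hwE : ∑' i, wE i = 1) (hwP : ∑' j, wP j = 1) (q : ι × κ) :
    prio wE wP q ≤ 1 :=
  mul_le_one' (wE_le_one hwE q.1) (le_of_le_of_eq (ENNReal.le_tsum q.2) hwP)

lemma prio_ne_top (hwE : ∑' i, wE i = 1) (hwP : ∑' j, wP j = 1) (q : ι × κ) :
    prio wE wP q ≠ ⊤ :=
  ((prio_le_one hwE hwP q).trans_lt ENNReal.one_lt_top).ne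

lemma tsum_prio (hwE : ∑' i, wE i = 1) (hwP : ∑' j, wP j = 1) :
    ∑' q : ι × κ, prio wE wP q = 1 := by
  rw [ENNReal.tsum_prod']
  calc ∑' (i : ι) (j : κ), prio wE wP (i, j)
      = ∑' i : ι, wE i * ∑' j, wP j :=
        tsum_congr fun i => by simp only [prio]; exact ENNReal.tsum_mul_left
    _ = 1 := by rw [hwP, ENNReal.tsum_mul_right, hwE, one_mul]

lemma tsum_pmf (h : MHist A O R) (hE0 : ZEn wE νs h ≠ 0) (hEfin : ZEn wE νs h ≠ ⊤)
    (hP0 : ZPn wP πs h ≠ 0) (hPfin : ZPn wP πs h ≠ ⊤) :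
    ∑' q : ι × κ, pmf wE νs wP πs h q = 1 := by
  rw [ENNReal.tsum_prod']
  calc ∑' (i : ι) (j : κ), pmf wE νs wP πs h (i, j)
      = ∑' i : ι, postE wE νs h i * ∑' j, postP wP πs h j :=
        tsum_congr fun i => by simp only [pmf]; exact ENNReal.tsum_mul_left
    _ = 1 := by rw [tsum_postP h hP0 hPfin, ENNReal.tsum_mul_right, tsum_postE h hE0 hEfin,
        one_mul]

lemma summable_pmf_toReal (h : MHist A O R) (hE0 : ZEn wE νs h ≠ 0)
    (hEfin : ZEn wE νs h ≠ ⊤) (hP0 : ZPn wP πs h ≠ 0) (hPfin : ZPn wP πs h ≠ ⊤) :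
    Summable fun q : ι × κ => (pmf wE νs wP πs h q).toReal :=
  ENNReal.summable_toReal (by rw [tsum_pmf h hE0 hEfin hP0 hPfin]; exact ENNReal.one_ne_top)

lemma tsum_pmf_toReal (h : MHist A O R) (hE0 : ZEn wE νs h ≠ 0)
    (hEfin : ZEn wE νs h ≠ ⊤) (hP0 : ZPn wP πs h ≠ 0) (hPfin : ZPn wP πs h ≠ ⊤) :
    ∑' q : ι × κ, (pmf wE νs wP πs h q).toReal = 1 := by
  rw [← ENNReal.tsum_toReal_eq (pmf_ne_top h), tsum_pmf h hE0 hEfin hP0 hPfin,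
    ENNReal.toReal_one]

lemma summable_prio_toReal (hwE : ∑' i, wE i = 1) (hwP : ∑' j, wP j = 1) :
    Summable fun q : ι × κ => (prio wE wP q).toReal :=
  ENNReal.summable_toReal (by rw [tsum_prio hwE hwP]; exact ENNReal.one_ne_top)

lemma tsum_prio_toReal (hwE : ∑' i, wE i = 1) (hwP : ∑' j, wP j = 1) :
    ∑' q : ι × κ, (prio wE wP q).toReal = 1 := by
  rw [← ENNReal.tsum_toReal_eq (prio_ne_top hwE hwP), tsum_prio hwE hwP, ENNReal.toReal_one]

/-! ### Support and domination properties of the joint posterior -/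

lemma ZEn_ne_top (hwE : ∑' i, wE i = 1) (hνs : ∀ i, IsMEnv (νs i)) (h : MHist A O R) :
    ZEn wE νs h ≠ ⊤ := ((ZEn_le_one hwE hνs h).trans_lt ENNReal.one_lt_top).ne

lemma ZPn_ne_top (hwP : ∑' j, wP j = 1) (hπs : ∀ j, IsMPolicy (πs j)) (h : MHist A O R) :
    ZPn wP πs h ≠ ⊤ := ((ZPn_le_one hwP hπs h).trans_lt ENNReal.one_lt_top).ne

lemma pmf_eq_zero_of_ZE (h : MHist A O R) (hE : ZEn wE νs h = 0) (q : ι × κ) :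
    pmf wE νs wP πs h q = 0 := by rw [pmf, postE_zero_of h hE, zero_mul]

lemma pmf_eq_zero_of_ZP (h : MHist A O R) (hP : ZPn wP πs h = 0) (q : ι × κ) :
    pmf wE νs wP πs h q = 0 := by rw [pmf, postP_zero_of h hP, mul_zero]

lemma pmf_zero_of_prio (h : MHist A O R) (q : ι × κ) (h0 : prio wE wP q = 0) :
    pmf wE νs wP πs h q = 0 := by
  rcases mul_eq_zero.mp h0 with h1 | h1
  · rw [pmf, postE_def, h1, zero_mul, ENNReal.zero_div, zero_mul]
  · rw [pmf, postP_def, h1, zero_mul, ENNReal.zero_div, mul_zero]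

lemma num_ne_zero_of_pmf {h : MHist A O R} {q : ι × κ} (hq : pmf wE νs wP πs h q ≠ 0) :
    wE q.1 * envLik (νs q.1) h ≠ 0 ∧ wP q.2 * polLik (πs q.2) h ≠ 0 := by
  constructor
  · intro h0; apply hq; rw [pmf, postE_def, h0, ENNReal.zero_div, zero_mul]
  · intro h0; apply hq; rw [pmf, postP_def, h0, ENNReal.zero_div, mul_zero]

lemma envLik_append_le {ν : MEnv A O R} (hν : IsMEnv ν) (g l : MHist A O R) :
    envLik ν (g ++ l) ≤ envLik ν g := by
  rw [envLik_def', prodTake_append, ← envLik_def']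
  exact (mul_le_mul_right
    (prodTake_le_one (fun g' y => env_le_one hν _ _ _) l) _).trans_eq (mul_one _)

lemma polLik_append_le {π : MPolicy A O R} (hπ : IsMPolicy π) (g l : MHist A O R) :
    polLik π (g ++ l) ≤ polLik π g := by
  rw [polLik_def', prodTake_append, ← polLik_def']
  exact (mul_le_mul_right
    (prodTake_le_one (fun g' y => by split <;> simp [pol_le_one hπ]) l) _).trans_eq (mul_one _)

lemma ZEn_append_le (hνs : ∀ i, IsMEnv (νs i)) (g l : MHist A O R) :
    ZEn wE νs (g ++ l) ≤ ZEn wE νs g :=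
  ENNReal.tsum_le_tsum fun i => mul_le_mul_right (envLik_append_le (hνs i) g l) _

lemma ZPn_append_le (hπs : ∀ j, IsMPolicy (πs j)) (g l : MHist A O R) :
    ZPn wP πs (g ++ l) ≤ ZPn wP πs g :=
  ENNReal.tsum_le_tsum fun j => mul_le_mul_right (polLik_append_le (hπs j) g l) _

lemma pmf_prefix_ne_zero (hwE : ∑' i, wE i = 1) (hνs : ∀ i, IsMEnv (νs i))
    (hwP : ∑' j, wP j = 1) (hπs : ∀ j, IsMPolicy (πs j)) {g l : MHist A O R} {q : ι × κ}
    (hq : pmf wE νs wP πs (g ++ l) q ≠ 0) :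
    pmf wE νs wP πs g q ≠ 0 ∧ prio wE wP q ≠ 0 := by
  obtain ⟨hE, hP⟩ := num_ne_zero_of_pmf hq
  have hwE1 : wE q.1 ≠ 0 := left_ne_zero_of_mul hE
  have hwP1 : wP q.2 ≠ 0 := left_ne_zero_of_mul hP
  have hL' : envLik (νs q.1) (g ++ l) ≠ 0 := right_ne_zero_of_mul hE
  have hM' : polLik (πs q.2) (g ++ l) ≠ 0 := right_ne_zero_of_mul hP
  have hL : envLik (νs q.1) g ≠ 0 := by
    rw [envLik_def', prodTake_append, ← envLik_def'] at hL'
    exact left_ne_zero_of_mul hL'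
  have hM : polLik (πs q.2) g ≠ 0 := by
    rw [polLik_def', prodTake_append, ← polLik_def'] at hM'
    exact left_ne_zero_of_mul hM'
  refine ⟨mul_ne_zero ?_ ?_, mul_ne_zero hwE1 hwP1⟩
  · rw [postE_def]
    rw [Ne, ENNReal.div_eq_zero_iff]
    push_neg
    exact ⟨mul_ne_zero hwE1 hL, ZEn_ne_top hwE hνs g⟩
  · rw [postP_def]
    rw [Ne, ENNReal.div_eq_zero_iff]
    push_neg
    exact ⟨mul_ne_zero hwP1 hM, ZPn_ne_top hwP hπs g⟩

lemma pmf_le_prio_mul (hwE : ∑' i, wE i = 1) (hνs : ∀ i, IsMEnv (νs i))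
    (hwP : ∑' j, wP j = 1) (hπs : ∀ j, IsMPolicy (πs j)) (h : MHist A O R)
    (hE0 : ZEn wE νs h ≠ 0) (hP0 : ZPn wP πs h ≠ 0) (q : ι × κ) :
    pmf wE νs wP πs h q ≤ prio wE wP q * (ZEn wE νs h * ZPn wP πs h)⁻¹ := by
  have e1 : postE wE νs h q.1 ≤ wE q.1 * (ZEn wE νs h)⁻¹ := by
    rw [postE_def, div_eq_mul_inv]
    exact mul_le_mul_left
      ((mul_le_mul_right (envLik_le_one (hνs q.1) h) _).trans_eq (mul_one _)) _
  have e2 : postP wP πs h q.2 ≤ wP q.2 * (ZPn wP πs h)⁻¹ := by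
    rw [postP_def, div_eq_mul_inv]
    exact mul_le_mul_left
      ((mul_le_mul_right (polLik_le_one (hπs q.2) h) _).trans_eq (mul_one _)) _
  calc pmf wE νs wP πs h q ≤ wE q.1 * (ZEn wE νs h)⁻¹ * (wP q.2 * (ZPn wP πs h)⁻¹) :=
        mul_le_mul' e1 e2
    _ = prio wE wP q * (ZEn wE νs h * ZPn wP πs h)⁻¹ := by
        rw [ENNReal.mul_inv (Or.inl hE0) (Or.inr hP0), prio]; ring

lemma pmf_toReal_le (hwE : ∑' i, wE i = 1) (hνs : ∀ i, IsMEnv (νs i))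
    (hwP : ∑' j, wP j = 1) (hπs : ∀ j, IsMPolicy (πs j)) (h : MHist A O R)
    (hE0 : ZEn wE νs h ≠ 0) (hP0 : ZPn wP πs h ≠ 0) (q : ι × κ) :
    (pmf wE νs wP πs h q).toReal
      ≤ (prio wE wP q).toReal * ((ZEn wE νs h * ZPn wP πs h)⁻¹).toReal := by
  rw [← ENNReal.toReal_mul]
  refine ENNReal.toReal_mono ?_ (pmf_le_prio_mul hwE hνs hwP hπs h hE0 hP0 q)
  exact ENNReal.mul_ne_top (prio_ne_top hwE hwP q)
    (ENNReal.inv_ne_top.mpr (mul_ne_zero hE0 hP0))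

lemma pmf_mul_Z (hwE : ∑' i, wE i = 1) (hνs : ∀ i, IsMEnv (νs i))
    (hwP : ∑' j, wP j = 1) (hπs : ∀ j, IsMPolicy (πs j)) (h : MHist A O R)
    (hE0 : ZEn wE νs h ≠ 0) (hP0 : ZPn wP πs h ≠ 0) (q : ι × κ) :
    pmf wE νs wP πs h q * (ZEn wE νs h * ZPn wP πs h)
      = wE q.1 * envLik (νs q.1) h * (wP q.2 * polLik (πs q.2) h) := by
  rw [pmf, postE_def, postP_def, div_eq_mul_inv, div_eq_mul_inv]
  have c1 : (ZEn wE νs h)⁻¹ * ZEn wE νs h = 1 :=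
    ENNReal.inv_mul_cancel hE0 (ZEn_ne_top hwE hνs h)
  have c2 : (ZPn wP πs h)⁻¹ * ZPn wP πs h = 1 :=
    ENNReal.inv_mul_cancel hP0 (ZPn_ne_top hwP hπs h)
  calc wE q.1 * envLik (νs q.1) h * (ZEn wE νs h)⁻¹ *
        (wP q.2 * polLik (πs q.2) h * (ZPn wP πs h)⁻¹) * (ZEn wE νs h * ZPn wP πs h)
      = wE q.1 * envLik (νs q.1) h * (wP q.2 * polLik (πs q.2) h) *
          (((ZEn wE νs h)⁻¹ * ZEn wE νs h) * ((ZPn wP πs h)⁻¹ * ZPn wP πs h)) := by ring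
    _ = _ := by rw [c1, c2, one_mul, mul_one]

lemma pmf_append_mul_Z_le (hwE : ∑' i, wE i = 1) (hνs : ∀ i, IsMEnv (νs i))
    (hwP : ∑' j, wP j = 1) (hπs : ∀ j, IsMPolicy (πs j)) (g l : MHist A O R) (q : ι × κ) :
    pmf wE νs wP πs (g ++ l) q * (ZEn wE νs (g ++ l) * ZPn wP πs (g ++ l))
      ≤ pmf wE νs wP πs g q := by
  by_cases hE' : ZEn wE νs (g ++ l) = 0
  · rw [pmf_eq_zero_of_ZE _ hE', zero_mul]; exact zero_le
  by_cases hP' : ZPn wP πs (g ++ l) = 0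
  · rw [pmf_eq_zero_of_ZP _ hP', zero_mul]; exact zero_le
  have hEg : ZEn wE νs g ≠ 0 := fun h0 =>
    hE' (le_antisymm (h0 ▸ ZEn_append_le hνs g l) (zero_le))
  have hPg : ZPn wP πs g ≠ 0 := fun h0 =>
    hP' (le_antisymm (h0 ▸ ZPn_append_le hπs g l) (zero_le))
  rw [pmf_mul_Z hwE hνs hwP hπs _ hE' hP' q]
  calc wE q.1 * envLik (νs q.1) (g ++ l) * (wP q.2 * polLik (πs q.2) (g ++ l))
      ≤ wE q.1 * envLik (νs q.1) g * (wP q.2 * polLik (πs q.2) g) :=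
        mul_le_mul' (mul_le_mul_right (envLik_append_le (hνs q.1) g l) _)
          (mul_le_mul_right (polLik_append_le (hπs q.2) g l) _)
    _ = pmf wE νs wP πs g q * (ZEn wE νs g * ZPn wP πs g) :=
        (pmf_mul_Z hwE hνs hwP hπs g hEg hPg q).symm
    _ ≤ pmf wE νs wP πs g q * 1 :=
        mul_le_mul_right (mul_le_one' (ZEn_le_one hwE hνs g) (ZPn_le_one hwP hπs g)) _
    _ = pmf wE νs wP πs g q := mul_one _

lemma pmf_append_mul_Z_le_toReal (hwE : ∑' i, wE i = 1) (hνs : ∀ i, IsMEnv (νs i))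
    (hwP : ∑' j, wP j = 1) (hπs : ∀ j, IsMPolicy (πs j)) (g l : MHist A O R) (q : ι × κ) :
    (pmf wE νs wP πs (g ++ l) q).toReal * (ZEn wE νs (g ++ l) * ZPn wP πs (g ++ l)).toReal
      ≤ (pmf wE νs wP πs g q).toReal := by
  rw [← ENNReal.toReal_mul]
  exact ENNReal.toReal_mono (pmf_ne_top g q) (pmf_append_mul_Z_le hwE hνs hwP hπs g l q)

/-! ### Summability of entropy-type series -/

lemma summable_abs_Dre (hwE : ∑' i, wE i = 1) (hνs : ∀ i, IsMEnv (νs i))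
    (hwP : ∑' j, wP j = 1) (hπs : ∀ j, IsMPolicy (πs j)) (h : MHist A O R)
    (hE0 : ZEn wE νs h ≠ 0) (hP0 : ZPn wP πs h ≠ 0) :
    Summable fun q : ι × κ => |(pmf wE νs wP πs h q).toReal *
      Real.log ((pmf wE νs wP πs h q).toReal / (prio wE wP q).toReal)| := by
  have hEfin := ZEn_ne_top hwE hνs h
  have hPfin := ZPn_ne_top hwP hπs h
  set C := ((ZEn wE νs h * ZPn wP πs h)⁻¹).toReal with hCdef
  refine Summable.of_nonneg_of_le (fun q => abs_nonneg _) (fun q => ?_)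
    (((summable_pmf_toReal h hE0 hEfin hP0 hPfin).mul_right (max (Real.log C) 0)).add
      (summable_prio_toReal hwE hwP))
  refine abs_mul_log_div_le ENNReal.toReal_nonneg ENNReal.toReal_nonneg (fun h0 => ?_)
    (pmf_toReal_le hwE hνs hwP hπs h hE0 hP0 q)
  have hprio : prio wE wP q = 0 := by
    rcases ENNReal.toReal_eq_zero_iff _ |>.mp h0 with h1 | h1
    · exact h1
    · exact absurd h1 (prio_ne_top hwE hwP q)
  rw [pmf_zero_of_prio h q hprio, ENNReal.toReal_zero]

lemma summable_abs_cross (hwE : ∑' i, wE i = 1) (hνs : ∀ i, IsMEnv (νs i))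
    (hwP : ∑' j, wP j = 1) (hπs : ∀ j, IsMPolicy (πs j)) (g l : MHist A O R)
    (hEg : ZEn wE νs g ≠ 0) (hPg : ZPn wP πs g ≠ 0)
    (hE' : ZEn wE νs (g ++ l) ≠ 0) (hP' : ZPn wP πs (g ++ l) ≠ 0) :
    Summable fun q : ι × κ => |(pmf wE νs wP πs (g ++ l) q).toReal *
      Real.log ((pmf wE νs wP πs g q).toReal / (prio wE wP q).toReal)| := by
  have hE'fin := ZEn_ne_top hwE hνs (g ++ l)
  have hP'fin := ZPn_ne_top hwP hπs (g ++ l)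
  set z := (ZEn wE νs (g ++ l) * ZPn wP πs (g ++ l)).toReal with hzdef
  set C := ((ZEn wE νs g * ZPn wP πs g)⁻¹).toReal with hCdef
  set K := max (Real.log C) 0 + |Real.log z| with hKdef
  have hK : 0 ≤ K := add_nonneg (le_max_right _ _) (abs_nonneg _)
  refine Summable.of_nonneg_of_le (fun q => abs_nonneg _) (fun q => ?_)
    (((summable_pmf_toReal (g ++ l) hE' hE'fin hP' hP'fin).mul_right K).add
      (summable_prio_toReal hwE hwP))
  by_cases hq : pmf wE νs wP πs (g ++ l) q = 0
  · rw [hq]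
    simp only [ENNReal.toReal_zero, zero_mul, abs_zero]
    positivity
  · obtain ⟨hpg, hprio⟩ := pmf_prefix_ne_zero hwE hνs hwP hπs hq
    exact abs_mul_log_div_le' ENNReal.toReal_nonneg
      (ENNReal.toReal_pos (mul_ne_zero hE' hP') (ENNReal.mul_ne_top hE'fin hP'fin))
      (ENNReal.toReal_pos hpg (pmf_ne_top g q))
      (ENNReal.toReal_pos hprio (prio_ne_top hwE hwP q))
      (pmf_append_mul_Z_le_toReal hwE hνs hwP hπs g l q)
      (pmf_toReal_le hwE hνs hwP hπs g hEg hPg q)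

/-! ### Information-gain terms and Gibbs' inequality -/

noncomputable def Dterm (wE : ι → ℝ≥0∞) (νs : ι → MEnv A O R) (wP : κ → ℝ≥0∞)
    (πs : κ → MPolicy A O R) (h : MHist A O R) (q : ι × κ) : ℝ :=
  (pmf wE νs wP πs h q).toReal *
    Real.log ((pmf wE νs wP πs h q).toReal / (prio wE wP q).toReal)

noncomputable def Cterm (wE : ι → ℝ≥0∞) (νs : ι → MEnv A O R) (wP : κ → ℝ≥0∞)
    (πs : κ → MPolicy A O R) (g h' : MHist A O R) (q : ι × κ) : ℝ :=
  (pmf wE νs wP πs h' q).toReal *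
    Real.log ((pmf wE νs wP πs g q).toReal / (prio wE wP q).toReal)

noncomputable def IGterm (wE : ι → ℝ≥0∞) (νs : ι → MEnv A O R) (wP : κ → ℝ≥0∞)
    (πs : κ → MPolicy A O R) (g h' : MHist A O R) (q : ι × κ) : ℝ :=
  (pmf wE νs wP πs h' q).toReal *
    Real.log ((pmf wE νs wP πs h' q).toReal / (pmf wE νs wP πs g q).toReal)

noncomputable def Cre (wE : ι → ℝ≥0∞) (νs : ι → MEnv A O R) (wP : κ → ℝ≥0∞)
    (πs : κ → MPolicy A O R) (g h' : MHist A O R) : ℝ :=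
  ∑' q : ι × κ, Cterm wE νs wP πs g h' q

lemma Dre_eq_tsum (h : MHist A O R) :
    Dre wE νs wP πs h = ∑' q : ι × κ, Dterm wE νs wP πs h q := rfl

lemma neg_mul_log_div_le {x w : ℝ} (hx : 0 ≤ x) (hw : 0 ≤ w) (h0 : x ≠ 0 → w ≠ 0) :
    -(x * Real.log (x / w)) ≤ w - x := by
  rcases eq_or_lt_of_le hx with h | hx0
  · rw [← h]; simp only [zero_mul, neg_zero, sub_zero]; linarith
  · have hw0 : 0 < w := lt_of_le_of_ne hw (Ne.symm (h0 hx0.ne'))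
    linarith [mul_log_div_ge hx hw0]

lemma toReal_ne_zero_prio (hwE : ∑' i, wE i = 1) (hwP : ∑' j, wP j = 1) {q : ι × κ}
    (h0 : (prio wE wP q).toReal = 0) : prio wE wP q = 0 := by
  rcases (ENNReal.toReal_eq_zero_iff _).mp h0 with h1 | h1
  · exact h1
  · exact absurd h1 (prio_ne_top hwE hwP q)

lemma Dre_nonneg (hwE : ∑' i, wE i = 1) (hνs : ∀ i, IsMEnv (νs i))
    (hwP : ∑' j, wP j = 1) (hπs : ∀ j, IsMPolicy (πs j)) (h : MHist A O R)
    (hE0 : ZEn wE νs h ≠ 0) (hP0 : ZPn wP πs h ≠ 0) : 0 ≤ Dre wE νs wP πs h := by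
  have hEfin := ZEn_ne_top hwE hνs h
  have hPfin := ZPn_ne_top hwP hπs h
  have hsum : Summable (Dterm wE νs wP πs h) :=
    (summable_abs_Dre hwE hνs hwP hπs h hE0 hP0).of_abs
  have hptw : ∀ q : ι × κ, -(Dterm wE νs wP πs h q)
      ≤ (prio wE wP q).toReal - (pmf wE νs wP πs h q).toReal := by
    intro q
    refine neg_mul_log_div_le ENNReal.toReal_nonneg ENNReal.toReal_nonneg (fun hx hw => hx ?_)
    rw [pmf_zero_of_prio h q (toReal_ne_zero_prio hwE hwP hw), ENNReal.toReal_zero]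
  have hle := Summable.tsum_le_tsum hptw hsum.neg
    ((summable_prio_toReal hwE hwP).sub (summable_pmf_toReal h hE0 hEfin hP0 hPfin))
  rw [tsum_neg, Summable.tsum_sub (summable_prio_toReal hwE hwP)
      (summable_pmf_toReal h hE0 hEfin hP0 hPfin), tsum_prio_toReal hwE hwP,
    tsum_pmf_toReal h hE0 hEfin hP0 hPfin] at hle
  have : -(Dre wE νs wP πs h) ≤ 0 := by rw [Dre_eq_tsum]; linarith
  linarith

lemma IGterm_split (hwE : ∑' i, wE i = 1) (hνs : ∀ i, IsMEnv (νs i))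
    (hwP : ∑' j, wP j = 1) (hπs : ∀ j, IsMPolicy (πs j)) (g l : MHist A O R) (q : ι × κ) :
    IGterm wE νs wP πs g (g ++ l) q
      = Dterm wE νs wP πs (g ++ l) q - Cterm wE νs wP πs g (g ++ l) q := by
  by_cases hq : pmf wE νs wP πs (g ++ l) q = 0
  · simp [IGterm, Dterm, Cterm, hq]
  · obtain ⟨hpg, hprio⟩ := pmf_prefix_ne_zero hwE hνs hwP hπs hq
    have ha := ENNReal.toReal_pos hq (pmf_ne_top _ q)
    have hb := ENNReal.toReal_pos hpg (pmf_ne_top g q)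
    have hw := ENNReal.toReal_pos hprio (prio_ne_top hwE hwP q)
    rw [IGterm, Dterm, Cterm, Real.log_div ha.ne' hb.ne', Real.log_div ha.ne' hw.ne',
      Real.log_div hb.ne' hw.ne']
    ring

lemma summable_IGterm (hwE : ∑' i, wE i = 1) (hνs : ∀ i, IsMEnv (νs i))
    (hwP : ∑' j, wP j = 1) (hπs : ∀ j, IsMPolicy (πs j)) (g l : MHist A O R)
    (hEg : ZEn wE νs g ≠ 0) (hPg : ZPn wP πs g ≠ 0)
    (hE' : ZEn wE νs (g ++ l) ≠ 0) (hP' : ZPn wP πs (g ++ l) ≠ 0) :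
    Summable (IGterm wE νs wP πs g (g ++ l)) :=
  Summable.congr (((summable_abs_Dre hwE hνs hwP hπs (g ++ l) hE' hP').of_abs).sub
      ((summable_abs_cross hwE hνs hwP hπs g l hEg hPg hE' hP').of_abs))
    (fun q => (IGterm_split hwE hνs hwP hπs g l q).symm)

lemma IG_eq_tsum (g l : MHist A O R)
    (hsum : Summable (IGterm wE νs wP πs g (g ++ l))) :
    IG wE νs wP πs g l = ∑' q : ι × κ, IGterm wE νs wP πs g (g ++ l) q := by
  rw [IG]
  exact (Summable.tsum_prod' hsum (fun b => hsum.prod_factor b)).symm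

lemma IG_eq (hwE : ∑' i, wE i = 1) (hνs : ∀ i, IsMEnv (νs i))
    (hwP : ∑' j, wP j = 1) (hπs : ∀ j, IsMPolicy (πs j)) (g l : MHist A O R)
    (hEg : ZEn wE νs g ≠ 0) (hPg : ZPn wP πs g ≠ 0)
    (hE' : ZEn wE νs (g ++ l) ≠ 0) (hP' : ZPn wP πs (g ++ l) ≠ 0) :
    IG wE νs wP πs g l = Dre wE νs wP πs (g ++ l) - Cre wE νs wP πs g (g ++ l) := by
  rw [IG_eq_tsum g l (summable_IGterm hwE hνs hwP hπs g l hEg hPg hE' hP')]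
  calc ∑' q : ι × κ, IGterm wE νs wP πs g (g ++ l) q
      = ∑' q : ι × κ, (Dterm wE νs wP πs (g ++ l) q - Cterm wE νs wP πs g (g ++ l) q) :=
        tsum_congr (IGterm_split hwE hνs hwP hπs g l)
    _ = Dre wE νs wP πs (g ++ l) - Cre wE νs wP πs g (g ++ l) :=
        Summable.tsum_sub ((summable_abs_Dre hwE hνs hwP hπs (g ++ l) hE' hP').of_abs)
          ((summable_abs_cross hwE hνs hwP hπs g l hEg hPg hE' hP').of_abs)

lemma IG_nonneg (hwE : ∑' i, wE i = 1) (hνs : ∀ i, IsMEnv (νs i))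
    (hwP : ∑' j, wP j = 1) (hπs : ∀ j, IsMPolicy (πs j)) (g l : MHist A O R)
    (hEg : ZEn wE νs g ≠ 0) (hPg : ZPn wP πs g ≠ 0)
    (hE' : ZEn wE νs (g ++ l) ≠ 0) (hP' : ZPn wP πs (g ++ l) ≠ 0) :
    0 ≤ IG wE νs wP πs g l := by
  have hEfin := ZEn_ne_top hwE hνs (g ++ l)
  have hPfin := ZPn_ne_top hwP hπs (g ++ l)
  have hEfing := ZEn_ne_top hwE hνs g
  have hPfing := ZPn_ne_top hwP hπs g
  have hsum := summable_IGterm hwE hνs hwP hπs g l hEg hPg hE' hP'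
  have hptw : ∀ q : ι × κ, -(IGterm wE νs wP πs g (g ++ l) q)
      ≤ (pmf wE νs wP πs g q).toReal - (pmf wE νs wP πs (g ++ l) q).toReal := by
    intro q
    refine neg_mul_log_div_le ENNReal.toReal_nonneg ENNReal.toReal_nonneg (fun hx hw => ?_)
    have hq' : pmf wE νs wP πs (g ++ l) q ≠ 0 := fun h0 => hx (by rw [h0, ENNReal.toReal_zero])
    obtain ⟨hpg, -⟩ := pmf_prefix_ne_zero hwE hνs hwP hπs hq'
    exact (ENNReal.toReal_ne_zero.mpr ⟨hpg, pmf_ne_top g q⟩) hw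
  have hle := Summable.tsum_le_tsum hptw hsum.neg
    ((summable_pmf_toReal g hEg hEfing hPg hPfing).sub
      (summable_pmf_toReal (g ++ l) hE' hEfin hP' hPfin))
  rw [tsum_neg, Summable.tsum_sub (summable_pmf_toReal g hEg hEfing hPg hPfing)
      (summable_pmf_toReal (g ++ l) hE' hEfin hP' hPfin),
    tsum_pmf_toReal g hEg hEfing hPg hPfing,
    tsum_pmf_toReal (g ++ l) hE' hEfin hP' hPfin] at hle
  rw [IG_eq_tsum g l hsum]
  linarith

/-! ### The induced measures -/

noncomputable def Qm (wE : ι → ℝ≥0∞) (νs : ι → MEnv A O R) (wP : κ → ℝ≥0∞)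
    (πs : κ → MPolicy A O R) (β : MHist A O R → ℝ) (πstar : MPolicy A O R)
    (h : MHist A O R) : ℝ≥0∞ :=
  mFinProb β (pibar wP πs) πstar (xi wE νs) h

noncomputable def Pm (νs : ι → MEnv A O R) (πs : κ → MPolicy A O R)
    (β : MHist A O R → ℝ) (πstar : MPolicy A O R) (q : ι × κ) (h : MHist A O R) : ℝ≥0∞ :=
  mFinProb β (πs q.2) πstar (νs q.1) h

lemma stepQ_le_one (hwE : ∑' i, wE i = 1) (hνs : ∀ i, IsMEnv (νs i))
    (hwP : ∑' j, wP j = 1) (hπs : ∀ j, IsMPolicy (πs j))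
    (hβ01 : ∀ g, β g ∈ Set.Icc (0:ℝ) 1) (hstar : IsMPolicy πstar) :
    ∀ (g : MHist A O R) x, stepProb β (pibar wP πs) πstar (xi wE νs) g x ≤ 1 :=
  fun g x => stepProb_le_one hβ01 (fun g a => pibar_le_one hwP hπs g a)
    (fun g a => pol_le_one hstar g a) (fun g a p => xi_le_one hwE hνs g a p) g x

lemma Qm_le_one (hwE : ∑' i, wE i = 1) (hνs : ∀ i, IsMEnv (νs i))
    (hwP : ∑' j, wP j = 1) (hπs : ∀ j, IsMPolicy (πs j))
    (hβ01 : ∀ g, β g ∈ Set.Icc (0:ℝ) 1) (hstar : IsMPolicy πstar) (h : MHist A O R) :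
    Qm wE νs wP πs β πstar h ≤ 1 := by
  rw [Qm, mFinProb_def']
  exact prodTake_le_one (stepQ_le_one hwE hνs hwP hπs hβ01 hstar) h

lemma Qm_ne_top (hwE : ∑' i, wE i = 1) (hνs : ∀ i, IsMEnv (νs i))
    (hwP : ∑' j, wP j = 1) (hπs : ∀ j, IsMPolicy (πs j))
    (hβ01 : ∀ g, β g ∈ Set.Icc (0:ℝ) 1) (hstar : IsMPolicy πstar) (h : MHist A O R) :
    Qm wE νs wP πs β πstar h ≠ ⊤ :=
  ((Qm_le_one hwE hνs hwP hπs hβ01 hstar h).trans_lt ENNReal.one_lt_top).ne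

lemma Pm_le_one (hνs : ∀ i, IsMEnv (νs i)) (hπs : ∀ j, IsMPolicy (πs j))
    (hβ01 : ∀ g, β g ∈ Set.Icc (0:ℝ) 1) (hstar : IsMPolicy πstar) (q : ι × κ)
    (h : MHist A O R) : Pm νs πs β πstar q h ≤ 1 := by
  rw [Pm, mFinProb_def']
  exact prodTake_le_one (fun g x => stepProb_le_one hβ01 (fun g a => pol_le_one (hπs q.2) g a)
    (fun g a => pol_le_one hstar g a) (fun g a p => env_le_one (hνs q.1) g a p) g x) h

lemma Pm_ne_top (hνs : ∀ i, IsMEnv (νs i)) (hπs : ∀ j, IsMPolicy (πs j))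
    (hβ01 : ∀ g, β g ∈ Set.Icc (0:ℝ) 1) (hstar : IsMPolicy πstar) (q : ι × κ)
    (h : MHist A O R) : Pm νs πs β πstar q h ≠ ⊤ :=
  ((Pm_le_one hνs hπs hβ01 hstar q h).trans_lt ENNReal.one_lt_top).ne

lemma bayes' (hwE : ∑' i, wE i = 1) (hνs : ∀ i, IsMEnv (νs i))
    (hwP : ∑' j, wP j = 1) (hπs : ∀ j, IsMPolicy (πs j)) (q : ι × κ) (h : MHist A O R) :
    prio wE wP q * Pm νs πs β πstar q h
      = Qm wE νs wP πs β πstar h * pmf wE νs wP πs h q :=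
  bayes hwE hνs hwP hπs q.1 q.2 h

lemma tsum_Pm_frag (hνs : ∀ i, IsMEnv (νs i)) (hπs : ∀ j, IsMPolicy (πs j))
    (hβ01 : ∀ g, β g ∈ Set.Icc (0:ℝ) 1) (hstar : IsMPolicy πstar) (q : ι × κ) (n : ℕ)
    (h : MHist A O R) :
    ∑' f : Fin n → MInter A O R, Pm νs πs β πstar q (h ++ List.ofFn f)
      = Pm νs πs β πstar q h :=
  tsum_mFinProb_frag hβ01 (hπs q.2) hstar (hνs q.1) n h

lemma Qm_append_zero (hwE : ∑' i, wE i = 1) (hνs : ∀ i, IsMEnv (νs i))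
    (hwP : ∑' j, wP j = 1) (hπs : ∀ j, IsMPolicy (πs j))
    (hβ01 : ∀ g, β g ∈ Set.Icc (0:ℝ) 1) (hstar : IsMPolicy πstar) {g : MHist A O R}
    (hQg : Qm wE νs wP πs β πstar g = 0) (l : MHist A O R) :
    Qm wE νs wP πs β πstar (g ++ l) = 0 :=
  le_antisymm (hQg ▸ mFinProb_append_le (stepQ_le_one hwE hνs hwP hπs hβ01 hstar) g l)
    (zero_le)

/-! ### The cross-term Fubini computation -/

lemma cross_fubini (hwE : ∑' i, wE i = 1) (hνs : ∀ i, IsMEnv (νs i))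
    (hwP : ∑' j, wP j = 1) (hπs : ∀ j, IsMPolicy (πs j))
    (hβ01 : ∀ g, β g ∈ Set.Icc (0:ℝ) 1) (hstar : IsMPolicy πstar) (g : MHist A O R)
    (m' : ℕ) (hEg : ZEn wE νs g ≠ 0) (hPg : ZPn wP πs g ≠ 0) :
    HasSum (fun f : Fin m' → MInter A O R =>
        (Qm wE νs wP πs β πstar (g ++ List.ofFn f)).toReal *
          Cre wE νs wP πs g (g ++ List.ofFn f))
      ((Qm wE νs wP πs β πstar g).toReal * Dre wE νs wP πs g) := by
  classical
  set Φ : (ι × κ) × (Fin m' → MInter A O R) → ℝ := fun p =>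
    (prio wE wP p.1 * Pm νs πs β πstar p.1 (g ++ List.ofFn p.2)).toReal *
      Real.log ((pmf wE νs wP πs g p.1).toReal / (prio wE wP p.1).toReal) with hΦdef
  have hPfin : ∀ (q : ι × κ) (h : MHist A O R), prio wE wP q * Pm νs πs β πstar q h ≠ ⊤ :=
    fun q h => ENNReal.mul_ne_top (prio_ne_top hwE hwP q) (Pm_ne_top hνs hπs hβ01 hstar q h)
  -- the ENNReal fragment sum for a fixed pair q
  have hfragE : ∀ q : ι × κ,
      (∑' f : Fin m' → MInter A O R, prio wE wP q * Pm νs πs β πstar q (g ++ List.ofFn f))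
        = prio wE wP q * Pm νs πs β πstar q g := by
    intro q
    rw [ENNReal.tsum_mul_left, tsum_Pm_frag hνs hπs hβ01 hstar q m' g]
  have hfragR : ∀ q : ι × κ,
      (∑' f : Fin m' → MInter A O R,
        (prio wE wP q * Pm νs πs β πstar q (g ++ List.ofFn f)).toReal)
        = (prio wE wP q * Pm νs πs β πstar q g).toReal := by
    intro q
    rw [← ENNReal.tsum_toReal_eq (fun f => hPfin q _), hfragE q]
  have hfragS : ∀ q : ι × κ,
      Summable (fun f : Fin m' → MInter A O R =>
        (prio wE wP q * Pm νs πs β πstar q (g ++ List.ofFn f)).toReal) := by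
    intro q
    exact ENNReal.summable_toReal (by rw [hfragE q]; exact hPfin q g)
  -- summability of |Φ|
  have habs : ∀ p, |Φ p| = (prio wE wP p.1 * Pm νs πs β πstar p.1 (g ++ List.ofFn p.2)).toReal *
      |Real.log ((pmf wE νs wP πs g p.1).toReal / (prio wE wP p.1).toReal)| := by
    intro p
    simp only [hΦdef]
    rw [abs_mul, abs_of_nonneg ENNReal.toReal_nonneg]
  have hDg : Summable fun q : ι × κ => |Dterm wE νs wP πs g q| :=
    summable_abs_Dre hwE hνs hwP hπs g hEg hPg
  have hsumabs : Summable fun p => |Φ p| := by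
    rw [summable_prod_of_nonneg (fun p => abs_nonneg _)]
    constructor
    · intro q
      refine Summable.congr ((hfragS q).mul_right
        (|Real.log ((pmf wE νs wP πs g q).toReal / (prio wE wP q).toReal)|)) (fun f => ?_)
      exact (habs (q, f)).symm
    · refine Summable.congr (hDg.mul_left (Qm wE νs wP πs β πstar g).toReal) (fun q => ?_)
      have h1 : ∀ f : Fin m' → MInter A O R, |Φ (q, f)|
          = (prio wE wP q * Pm νs πs β πstar q (g ++ List.ofFn f)).toReal *
            |Real.log ((pmf wE νs wP πs g q).toReal / (prio wE wP q).toReal)| :=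
        fun f => habs (q, f)
      calc (Qm wE νs wP πs β πstar g).toReal * |Dterm wE νs wP πs g q|
          = (prio wE wP q * Pm νs πs β πstar q g).toReal *
              |Real.log ((pmf wE νs wP πs g q).toReal / (prio wE wP q).toReal)| := by
            rw [bayes' hwE hνs hwP hπs q g, ENNReal.toReal_mul, Dterm, abs_mul,
              abs_of_nonneg (ENNReal.toReal_nonneg :
                (0:ℝ) ≤ (pmf wE νs wP πs g q).toReal)]
            ring
        _ = ∑' f : Fin m' → MInter A O R, |Φ (q, f)| := by
            rw [← hfragR q, ← tsum_mul_right]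
            exact (tsum_congr h1).symm
  have hΦ : Summable Φ := hsumabs.of_abs
  -- fiberwise over q : the total sum equals Q(g) · Dre(g)
  have hq_fiber : ∀ q : ι × κ, HasSum (fun f => Φ (q, f))
      ((Qm wE νs wP πs β πstar g).toReal * Dterm wE νs wP πs g q) := by
    intro q
    have hs : Summable fun f => Φ (q, f) := hΦ.prod_factor q
    have : (∑' f, Φ (q, f)) = (Qm wE νs wP πs β πstar g).toReal * Dterm wE νs wP πs g q := by
      calc (∑' f, Φ (q, f))
          = ∑' f : Fin m' → MInter A O R,
              (prio wE wP q * Pm νs πs β πstar q (g ++ List.ofFn f)).toReal *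
              Real.log ((pmf wE νs wP πs g q).toReal / (prio wE wP q).toReal) :=
            tsum_congr fun f => by simp only [hΦdef]
        _ = (∑' f : Fin m' → MInter A O R,
              (prio wE wP q * Pm νs πs β πstar q (g ++ List.ofFn f)).toReal) *
            Real.log ((pmf wE νs wP πs g q).toReal / (prio wE wP q).toReal) := tsum_mul_right
        _ = (prio wE wP q * Pm νs πs β πstar q g).toReal *
            Real.log ((pmf wE νs wP πs g q).toReal / (prio wE wP q).toReal) := by rw [hfragR q]
        _ = (Qm wE νs wP πs β πstar g).toReal * Dterm wE νs wP πs g q := by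
            rw [bayes' hwE hνs hwP hπs q g, ENNReal.toReal_mul, Dterm]; ring
    exact this ▸ hs.hasSum
  have htotal : HasSum (fun q : ι × κ =>
      (Qm wE νs wP πs β πstar g).toReal * Dterm wE νs wP πs g q) (∑' p, Φ p) :=
    hΦ.hasSum.prod_fiberwise hq_fiber
  have htotal' : HasSum (fun q : ι × κ =>
      (Qm wE νs wP πs β πstar g).toReal * Dterm wE νs wP πs g q)
      ((Qm wE νs wP πs β πstar g).toReal * Dre wE νs wP πs g) := by
    rw [Dre_eq_tsum]
    exact (hDg.of_abs.hasSum.mul_left _)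
  have hTotEq : (∑' p, Φ p) = (Qm wE νs wP πs β πstar g).toReal * Dre wE νs wP πs g :=
    htotal.unique htotal'
  -- fiberwise over f
  have hΦsw : Summable (fun p : (Fin m' → MInter A O R) × (ι × κ) => Φ p.swap) := hΦ.prod_symm
  have hswtotal : (∑' p : (Fin m' → MInter A O R) × (ι × κ), Φ p.swap) = ∑' p, Φ p :=
    Equiv.tsum_eq (Equiv.prodComm _ _) Φ
  have hf_fiber : ∀ f : Fin m' → MInter A O R, HasSum (fun q : ι × κ => Φ (q, f))
      ((Qm wE νs wP πs β πstar (g ++ List.ofFn f)).toReal *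
        Cre wE νs wP πs g (g ++ List.ofFn f)) := by
    intro f
    have hs : Summable fun q : ι × κ => Φ (q, f) := hΦsw.prod_factor f
    have hptw : ∀ q : ι × κ, Φ (q, f)
        = (Qm wE νs wP πs β πstar (g ++ List.ofFn f)).toReal *
          Cterm wE νs wP πs g (g ++ List.ofFn f) q := by
      intro q
      rw [hΦdef]
      show (prio wE wP q * Pm νs πs β πstar q (g ++ List.ofFn f)).toReal * _ = _
      rw [bayes' hwE hνs hwP hπs q (g ++ List.ofFn f), ENNReal.toReal_mul, Cterm]
      ring
    have : (∑' q : ι × κ, Φ (q, f))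
        = (Qm wE νs wP πs β πstar (g ++ List.ofFn f)).toReal *
          Cre wE νs wP πs g (g ++ List.ofFn f) := by
      rw [tsum_congr hptw, Cre, tsum_mul_left]
    exact this ▸ hs.hasSum
  have hfinal : HasSum (fun f : Fin m' → MInter A O R =>
      (Qm wE νs wP πs β πstar (g ++ List.ofFn f)).toReal *
        Cre wE νs wP πs g (g ++ List.ofFn f))
      (∑' p : (Fin m' → MInter A O R) × (ι × κ), Φ p.swap) :=
    HasSum.prod_fiberwise hΦsw.hasSum (fun f => hf_fiber f)
  rw [hswtotal, hTotEq] at hfinal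
  exact hfinal

/-! ### The per-block key inequality -/

lemma block_key (hwE : ∑' i, wE i = 1) (hνs : ∀ i, IsMEnv (νs i))
    (hwP : ∑' j, wP j = 1) (hπs : ∀ j, IsMPolicy (πs j))
    (hβ01 : ∀ g, β g ∈ Set.Icc (0:ℝ) 1) (hstar : IsMPolicy πstar) (m' : ℕ)
    (g : MHist A O R) :
    Qm wE νs wP πs β πstar g * ENNReal.ofReal (Dre wE νs wP πs g) +
      ∑' f : Fin m' → MInter A O R, Qm wE νs wP πs β πstar (g ++ List.ofFn f) *
        ENNReal.ofReal (IG wE νs wP πs g (List.ofFn f))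
    ≤ ∑' f : Fin m' → MInter A O R, Qm wE νs wP πs β πstar (g ++ List.ofFn f) *
        ENNReal.ofReal (Dre wE νs wP πs (g ++ List.ofFn f)) := by
  by_cases hQg : Qm wE νs wP πs β πstar g = 0
  · have hz : ∀ f : Fin m' → MInter A O R, Qm wE νs wP πs β πstar (g ++ List.ofFn f) = 0 :=
      fun f => Qm_append_zero hwE hνs hwP hπs hβ01 hstar hQg _
    simp [hQg, hz]
  obtain ⟨hEg, hPg⟩ := Q_ZEn_ne_zero hwE hνs hwP hπs hQg
  by_cases hTop : (∑' f : Fin m' → MInter A O R, Qm wE νs wP πs β πstar (g ++ List.ofFn f) *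
      ENNReal.ofReal (Dre wE νs wP πs (g ++ List.ofFn f))) = ⊤
  · exact hTop ▸ le_top
  have hQ'top : ∀ f : Fin m' → MInter A O R,
      Qm wE νs wP πs β πstar (g ++ List.ofFn f) ≠ ⊤ :=
    fun f => Qm_ne_top hwE hνs hwP hπs hβ01 hstar _
  have rsum : Summable (fun f : Fin m' → MInter A O R =>
      (Qm wE νs wP πs β πstar (g ++ List.ofFn f) *
        ENNReal.ofReal (Dre wE νs wP πs (g ++ List.ofFn f))).toReal) :=
    ENNReal.summable_toReal hTop
  have hcross := cross_fubini hwE hνs hwP hπs hβ01 hstar g m' hEg hPg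
  have hfid : ∀ f : Fin m' → MInter A O R,
      (Qm wE νs wP πs β πstar (g ++ List.ofFn f) *
        ENNReal.ofReal (Dre wE νs wP πs (g ++ List.ofFn f))).toReal
      = (Qm wE νs wP πs β πstar (g ++ List.ofFn f)).toReal * IG wE νs wP πs g (List.ofFn f)
        + (Qm wE νs wP πs β πstar (g ++ List.ofFn f)).toReal *
            Cre wE νs wP πs g (g ++ List.ofFn f) := by
    intro f
    by_cases hQf : Qm wE νs wP πs β πstar (g ++ List.ofFn f) = 0
    · rw [hQf]; simp
    · obtain ⟨hE', hP'⟩ := Q_ZEn_ne_zero hwE hνs hwP hπs hQf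
      have hDre0 : 0 ≤ Dre wE νs wP πs (g ++ List.ofFn f) :=
        Dre_nonneg hwE hνs hwP hπs _ hE' hP'
      rw [ENNReal.toReal_mul, ENNReal.toReal_ofReal hDre0,
        IG_eq hwE hνs hwP hπs g (List.ofFn f) hEg hPg hE' hP']
      ring
  have hIGsummable : Summable (fun f : Fin m' → MInter A O R =>
      (Qm wE νs wP πs β πstar (g ++ List.ofFn f)).toReal * IG wE νs wP πs g (List.ofFn f)) := by
    refine Summable.congr (rsum.sub hcross.summable) (fun f => ?_)
    rw [hfid f]; ring
  have hIGsum : (∑' f : Fin m' → MInter A O R,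
      (Qm wE νs wP πs β πstar (g ++ List.ofFn f)).toReal * IG wE νs wP πs g (List.ofFn f))
      = (∑' f : Fin m' → MInter A O R,
          (Qm wE νs wP πs β πstar (g ++ List.ofFn f) *
            ENNReal.ofReal (Dre wE νs wP πs (g ++ List.ofFn f))).toReal)
        - (Qm wE νs wP πs β πstar g).toReal * Dre wE νs wP πs g := by
    have h1 := Summable.tsum_sub rsum hcross.summable
    rw [hcross.tsum_eq] at h1
    rw [← h1]
    exact tsum_congr fun f => by rw [hfid f]; ring
  have hIGnn : ∀ f : Fin m' → MInter A O R,
      0 ≤ (Qm wE νs wP πs β πstar (g ++ List.ofFn f)).toReal *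
        IG wE νs wP πs g (List.ofFn f) := by
    intro f
    by_cases hQf : Qm wE νs wP πs β πstar (g ++ List.ofFn f) = 0
    · rw [hQf, ENNReal.toReal_zero, zero_mul]
    · obtain ⟨hE', hP'⟩ := Q_ZEn_ne_zero hwE hνs hwP hπs hQf
      exact mul_nonneg ENNReal.toReal_nonneg
        (IG_nonneg hwE hνs hwP hπs g (List.ofFn f) hEg hPg hE' hP')
  have hL1 : Qm wE νs wP πs β πstar g * ENNReal.ofReal (Dre wE νs wP πs g)
      = ENNReal.ofReal ((Qm wE νs wP πs β πstar g).toReal * Dre wE νs wP πs g) := by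
    rw [ENNReal.ofReal_mul ENNReal.toReal_nonneg,
      ENNReal.ofReal_toReal (Qm_ne_top hwE hνs hwP hπs hβ01 hstar g)]
  have hL2 : (∑' f : Fin m' → MInter A O R, Qm wE νs wP πs β πstar (g ++ List.ofFn f) *
        ENNReal.ofReal (IG wE νs wP πs g (List.ofFn f)))
      = ENNReal.ofReal (∑' f : Fin m' → MInter A O R,
          (Qm wE νs wP πs β πstar (g ++ List.ofFn f)).toReal *
            IG wE νs wP πs g (List.ofFn f)) := by
    rw [ENNReal.ofReal_tsum_of_nonneg hIGnn hIGsummable]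
    exact tsum_congr fun f => by
      rw [ENNReal.ofReal_mul ENNReal.toReal_nonneg, ENNReal.ofReal_toReal (hQ'top f)]
  have hR : (∑' f : Fin m' → MInter A O R, Qm wE νs wP πs β πstar (g ++ List.ofFn f) *
        ENNReal.ofReal (Dre wE νs wP πs (g ++ List.ofFn f)))
      = ENNReal.ofReal (∑' f : Fin m' → MInter A O R,
          (Qm wE νs wP πs β πstar (g ++ List.ofFn f) *
            ENNReal.ofReal (Dre wE νs wP πs (g ++ List.ofFn f))).toReal) := by
    rw [ENNReal.ofReal_tsum_of_nonneg (fun f => ENNReal.toReal_nonneg) rsum]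
    exact tsum_congr fun f =>
      (ENNReal.ofReal_toReal (ne_top_of_le_ne_top hTop (ENNReal.le_tsum f))).symm
  have ha : 0 ≤ (Qm wE νs wP πs β πstar g).toReal * Dre wE νs wP πs g :=
    mul_nonneg ENNReal.toReal_nonneg (Dre_nonneg hwE hνs hwP hπs g hEg hPg)
  have hTa : 0 ≤ (∑' f : Fin m' → MInter A O R,
      (Qm wE νs wP πs β πstar (g ++ List.ofFn f) *
        ENNReal.ofReal (Dre wE νs wP πs (g ++ List.ofFn f))).toReal)
      - (Qm wE νs wP πs β πstar g).toReal * Dre wE νs wP πs g :=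
    hIGsum ▸ tsum_nonneg hIGnn
  rw [hL1, hL2, hR, hIGsum, ← ENNReal.ofReal_add ha hTa]
  apply le_of_eq
  congr 1
  ring

/-! ### Expected relative entropy is bounded by the prior entropy -/

lemma prio_toReal_le_one (hwE : ∑' i, wE i = 1) (hwP : ∑' j, wP j = 1) (q : ι × κ) :
    (prio wE wP q).toReal ≤ 1 := by
  have := ENNReal.toReal_mono ENNReal.one_ne_top (prio_le_one hwE hwP q)
  rwa [ENNReal.toReal_one] at this

lemma log_one_div_prio_nonneg (hwE : ∑' i, wE i = 1) (hwP : ∑' j, wP j = 1) (q : ι × κ) :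
    0 ≤ Real.log (1 / (prio wE wP q).toReal) := by
  rcases eq_or_lt_of_le (ENNReal.toReal_nonneg : 0 ≤ (prio wE wP q).toReal) with h0 | hpos
  · rw [← h0]; simp
  · exact Real.log_nonneg (one_le_one_div hpos (prio_toReal_le_one hwE hwP q))

lemma pmf_toReal_le_one (h : MHist A O R) (q : ι × κ) :
    (pmf wE νs wP πs h q).toReal ≤ 1 := by
  have h1 : (pmf wE νs wP πs h q).toReal ≤ (1 : ℝ≥0∞).toReal :=
    ENNReal.toReal_mono ENNReal.one_ne_top (pmf_le_one h q)
  rwa [ENNReal.toReal_one] at h1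

lemma Q_Dre_le (hwE : ∑' i, wE i = 1) (hνs : ∀ i, IsMEnv (νs i))
    (hwP : ∑' j, wP j = 1) (hπs : ∀ j, IsMPolicy (πs j))
    (hβ01 : ∀ g, β g ∈ Set.Icc (0:ℝ) 1) (hstar : IsMPolicy πstar)
    (hent : FiniteEntropy wE wP) (h : MHist A O R) :
    Qm wE νs wP πs β πstar h * ENNReal.ofReal (Dre wE νs wP πs h)
      ≤ ∑' q : ι × κ, prio wE wP q * Pm νs πs β πstar q h *
          ENNReal.ofReal (Real.log (1 / (prio wE wP q).toReal)) := by
  by_cases hQ : Qm wE νs wP πs β πstar h = 0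
  · rw [hQ, zero_mul]; exact zero_le
  obtain ⟨hE0, hP0⟩ := Q_ZEn_ne_zero hwE hνs hwP hπs hQ
  have hDP_nn : ∀ q : ι × κ,
      0 ≤ (pmf wE νs wP πs h q).toReal * Real.log (1 / (prio wE wP q).toReal) :=
    fun q => mul_nonneg ENNReal.toReal_nonneg (log_one_div_prio_nonneg hwE hwP q)
  have hC := (pmf_toReal_le hwE hνs hwP hπs h hE0 hP0)
  have hDP_sum : Summable (fun q : ι × κ =>
      (pmf wE νs wP πs h q).toReal * Real.log (1 / (prio wE wP q).toReal)) := by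
    refine Summable.of_nonneg_of_le hDP_nn (fun q => ?_)
      (hent.mul_left ((ZEn wE νs h * ZPn wP πs h)⁻¹).toReal)
    calc (pmf wE νs wP πs h q).toReal * Real.log (1 / (prio wE wP q).toReal)
        ≤ (prio wE wP q).toReal * ((ZEn wE νs h * ZPn wP πs h)⁻¹).toReal *
            Real.log (1 / (prio wE wP q).toReal) :=
          mul_le_mul_of_nonneg_right (hC q) (log_one_div_prio_nonneg hwE hwP q)
      _ = ((ZEn wE νs h * ZPn wP πs h)⁻¹).toReal *
            ((prio wE wP q).toReal * Real.log (1 / (prio wE wP q).toReal)) := by ring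
  have hptw : ∀ q : ι × κ, Dterm wE νs wP πs h q
      ≤ (pmf wE νs wP πs h q).toReal * Real.log (1 / (prio wE wP q).toReal) := by
    intro q
    by_cases hq : pmf wE νs wP πs h q = 0
    · rw [Dterm, hq, ENNReal.toReal_zero, zero_mul, zero_mul]
    · obtain ⟨h1, h2⟩ := num_ne_zero_of_pmf hq
      have hprio : prio wE wP q ≠ 0 :=
        mul_ne_zero (left_ne_zero_of_mul h1) (left_ne_zero_of_mul h2)
      have hwpos := ENNReal.toReal_pos hprio (prio_ne_top hwE hwP q)
      have hppos := ENNReal.toReal_pos hq (pmf_ne_top h q)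
      refine mul_le_mul_of_nonneg_left (Real.log_le_log (div_pos hppos hwpos) ?_)
        ENNReal.toReal_nonneg
      gcongr
      exact pmf_toReal_le_one h q
  have hDre_le : Dre wE νs wP πs h ≤ ∑' q : ι × κ,
      (pmf wE νs wP πs h q).toReal * Real.log (1 / (prio wE wP q).toReal) := by
    rw [Dre_eq_tsum]
    exact Summable.tsum_le_tsum hptw ((summable_abs_Dre hwE hνs hwP hπs h hE0 hP0).of_abs) hDP_sum
  calc Qm wE νs wP πs β πstar h * ENNReal.ofReal (Dre wE νs wP πs h)
      ≤ Qm wE νs wP πs β πstar h * ENNReal.ofReal (∑' q : ι × κ,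
          (pmf wE νs wP πs h q).toReal * Real.log (1 / (prio wE wP q).toReal)) :=
        mul_le_mul_right (ENNReal.ofReal_le_ofReal hDre_le) _
    _ = ENNReal.ofReal ((Qm wE νs wP πs β πstar h).toReal * ∑' q : ι × κ,
          (pmf wE νs wP πs h q).toReal * Real.log (1 / (prio wE wP q).toReal)) := by
        rw [ENNReal.ofReal_mul ENNReal.toReal_nonneg,
          ENNReal.ofReal_toReal (Qm_ne_top hwE hνs hwP hπs hβ01 hstar h)]
    _ = ENNReal.ofReal (∑' q : ι × κ, (Qm wE νs wP πs β πstar h).toReal *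
          ((pmf wE νs wP πs h q).toReal * Real.log (1 / (prio wE wP q).toReal))) := by
        rw [tsum_mul_left]
    _ = ∑' q : ι × κ, ENNReal.ofReal ((Qm wE νs wP πs β πstar h).toReal *
          ((pmf wE νs wP πs h q).toReal * Real.log (1 / (prio wE wP q).toReal))) :=
        ENNReal.ofReal_tsum_of_nonneg
          (fun q => mul_nonneg ENNReal.toReal_nonneg (hDP_nn q))
          (hDP_sum.mul_left _)
    _ = ∑' q : ι × κ, prio wE wP q * Pm νs πs β πstar q h *
          ENNReal.ofReal (Real.log (1 / (prio wE wP q).toReal)) := by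
        refine tsum_congr fun q => ?_
        rw [show (Qm wE νs wP πs β πstar h).toReal *
            ((pmf wE νs wP πs h q).toReal * Real.log (1 / (prio wE wP q).toReal))
            = (Qm wE νs wP πs β πstar h * pmf wE νs wP πs h q).toReal *
              Real.log (1 / (prio wE wP q).toReal) from by rw [ENNReal.toReal_mul]; ring,
          ← bayes' hwE hνs hwP hπs q h,
          ENNReal.ofReal_mul ENNReal.toReal_nonneg,
          ENNReal.ofReal_toReal (ENNReal.mul_ne_top (prio_ne_top hwE hwP q)
            (Pm_ne_top hνs hπs hβ01 hstar q h))]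

lemma ED_le_ent (hwE : ∑' i, wE i = 1) (hνs : ∀ i, IsMEnv (νs i))
    (hwP : ∑' j, wP j = 1) (hπs : ∀ j, IsMPolicy (πs j))
    (hβ01 : ∀ g, β g ∈ Set.Icc (0:ℝ) 1) (hstar : IsMPolicy πstar)
    (hent : FiniteEntropy wE wP) (T : ℕ) :
    (∑' v : Fin T → MInter A O R, Qm wE νs wP πs β πstar (List.ofFn v) *
      ENNReal.ofReal (Dre wE νs wP πs (List.ofFn v))) ≤ ENNReal.ofReal (priorEnt wE wP) := by
  have hPm_one : ∀ q : ι × κ,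
      (∑' v : Fin T → MInter A O R, Pm νs πs β πstar q (List.ofFn v)) = 1 := by
    intro q
    have := tsum_Pm_frag hνs hπs hβ01 hstar q T ([] : MHist A O R)
    simpa [Pm, mFinProb_nil] using this
  calc (∑' v : Fin T → MInter A O R, Qm wE νs wP πs β πstar (List.ofFn v) *
        ENNReal.ofReal (Dre wE νs wP πs (List.ofFn v)))
      ≤ ∑' v : Fin T → MInter A O R, ∑' q : ι × κ, prio wE wP q *
          Pm νs πs β πstar q (List.ofFn v) *
          ENNReal.ofReal (Real.log (1 / (prio wE wP q).toReal)) :=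
        ENNReal.tsum_le_tsum fun v =>
          Q_Dre_le hwE hνs hwP hπs hβ01 hstar hent (List.ofFn v)
    _ = ∑' q : ι × κ, ∑' v : Fin T → MInter A O R, prio wE wP q *
          Pm νs πs β πstar q (List.ofFn v) *
          ENNReal.ofReal (Real.log (1 / (prio wE wP q).toReal)) := ENNReal.tsum_comm
    _ = ∑' q : ι × κ, prio wE wP q *
          ENNReal.ofReal (Real.log (1 / (prio wE wP q).toReal)) := by
        refine tsum_congr fun q => ?_
        calc (∑' v : Fin T → MInter A O R, prio wE wP q * Pm νs πs β πstar q (List.ofFn v) *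
              ENNReal.ofReal (Real.log (1 / (prio wE wP q).toReal)))
            = ∑' v : Fin T → MInter A O R,
                prio wE wP q * ENNReal.ofReal (Real.log (1 / (prio wE wP q).toReal)) *
                  Pm νs πs β πstar q (List.ofFn v) := tsum_congr fun v => by ring
          _ = prio wE wP q * ENNReal.ofReal (Real.log (1 / (prio wE wP q).toReal)) *
                (∑' v : Fin T → MInter A O R, Pm νs πs β πstar q (List.ofFn v)) :=
              ENNReal.tsum_mul_left
          _ = prio wE wP q * ENNReal.ofReal (Real.log (1 / (prio wE wP q).toReal)) := by
              rw [hPm_one q, mul_one]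
    _ = ∑' q : ι × κ, ENNReal.ofReal ((prio wE wP q).toReal *
          Real.log (1 / (prio wE wP q).toReal)) := by
        refine tsum_congr fun q => ?_
        rw [ENNReal.ofReal_mul ENNReal.toReal_nonneg,
          ENNReal.ofReal_toReal (prio_ne_top hwE hwP q)]
    _ = ENNReal.ofReal (∑' q : ι × κ, (prio wE wP q).toReal *
          Real.log (1 / (prio wE wP q).toReal)) :=
        (ENNReal.ofReal_tsum_of_nonneg
          (fun q => mul_nonneg ENNReal.toReal_nonneg (log_one_div_prio_nonneg hwE hwP q))
          hent).symm
    _ = ENNReal.ofReal (priorEnt wE wP) := by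
        rw [priorEnt]
        congr 1
        exact Summable.tsum_prod' hent fun b => hent.prod_factor b

/-! ### A partition bound for the lower Lebesgue integral -/

lemma sum_measure_inter_le {α γ : Type*} [MeasurableSpace α] (μ : Measure α)
    (F : Finset γ) (Apart : γ → Set α) (hA : ∀ g, MeasurableSet (Apart g))
    (hdisj : ∀ a b, a ≠ b → Disjoint (Apart a) (Apart b)) :
    ∀ S : Set α, (∑ y ∈ F, μ (Apart y ∩ S)) ≤ μ S := by
  classical
  induction F using Finset.induction with
  | empty => simp
  | @insert a F' ha ih =>
    intro S
    rw [Finset.sum_insert ha]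
    have key : μ (S ∩ Apart a) + μ (S \ Apart a) = μ S := measure_inter_add_diff S (hA a)
    have h2 : ∀ y ∈ F', Apart y ∩ S = Apart y ∩ (S \ Apart a) := by
      intro y hy
      ext x
      constructor
      · rintro ⟨hx1, hx2⟩
        exact ⟨hx1, hx2, fun hxa => (hdisj y a (fun h => ha (h ▸ hy))).le_bot ⟨hx1, hxa⟩⟩
      · rintro ⟨hx1, hx2, -⟩
        exact ⟨hx1, hx2⟩
    calc μ (Apart a ∩ S) + ∑ y ∈ F', μ (Apart y ∩ S)
        ≤ μ (S ∩ Apart a) + μ (S \ Apart a) := by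
          refine add_le_add (le_of_eq (by rw [Set.inter_comm])) ?_
          calc (∑ y ∈ F', μ (Apart y ∩ S))
              = ∑ y ∈ F', μ (Apart y ∩ (S \ Apart a)) :=
                Finset.sum_congr rfl fun y hy => by rw [h2 y hy]
            _ ≤ μ (S \ Apart a) := ih (S \ Apart a)
      _ = μ S := key

lemma lintegral_classify {α : Type*} [MeasurableSpace α] (μ : Measure α) {ι' : Type*}
    [Countable ι'] (tmap : α → ι') (c : ι' → ℝ≥0∞) :
    ∫⁻ x, c (tmap x) ∂μ ≤ ∑' i, c i * μ (tmap ⁻¹' {i}) := by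
  rw [MeasureTheory.lintegral]
  refine iSup₂_le fun φ hφ => ?_
  rw [SimpleFunc.lintegral]
  have hsub : ∀ y : ℝ≥0∞, μ (φ ⁻¹' {y}) ≤ ∑' i, μ (φ ⁻¹' {y} ∩ tmap ⁻¹' {i}) := by
    intro y
    have hcover : (φ ⁻¹' {y} : Set α) = ⋃ i, (φ ⁻¹' {y} ∩ tmap ⁻¹' {i}) := by
      ext x
      simp only [Set.mem_iUnion, Set.mem_inter_iff, Set.mem_preimage,
        Set.mem_singleton_iff]
      constructor
      · intro hx; exact ⟨tmap x, hx, rfl⟩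
      · rintro ⟨_, hx, -⟩; exact hx
    exact le_trans (le_of_eq (congrArg μ hcover))
      (measure_iUnion_le (μ := μ) (fun i => φ ⁻¹' {y} ∩ tmap ⁻¹' {i}))
  calc ∑ y ∈ φ.range, y * μ (φ ⁻¹' {y})
      ≤ ∑ y ∈ φ.range, y * ∑' i, μ (φ ⁻¹' {y} ∩ tmap ⁻¹' {i}) :=
        Finset.sum_le_sum fun y _ => mul_le_mul_right (hsub y) y
    _ = ∑ y ∈ φ.range, ∑' i, y * μ (φ ⁻¹' {y} ∩ tmap ⁻¹' {i}) :=
        Finset.sum_congr rfl fun y _ => ENNReal.tsum_mul_left.symm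
    _ = ∑' i, ∑ y ∈ φ.range, y * μ (φ ⁻¹' {y} ∩ tmap ⁻¹' {i}) :=
        (Summable.tsum_finsetSum (f := fun y i => y * μ (φ ⁻¹' {y} ∩ tmap ⁻¹' {i}))
          (fun y _ => ENNReal.summable)).symm
    _ ≤ ∑' i, c i * μ (tmap ⁻¹' {i}) := by
        refine ENNReal.tsum_le_tsum fun i => ?_
        calc ∑ y ∈ φ.range, y * μ (φ ⁻¹' {y} ∩ tmap ⁻¹' {i})
            ≤ ∑ y ∈ φ.range, c i * μ (φ ⁻¹' {y} ∩ tmap ⁻¹' {i}) := by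
              refine Finset.sum_le_sum fun y _ => ?_
              rcases Set.eq_empty_or_nonempty (φ ⁻¹' {y} ∩ tmap ⁻¹' {i}) with hempty | hne
              · rw [hempty]; simp
              · obtain ⟨x, hx1, hx2⟩ := hne
                have hy : φ x = y := hx1
                have hi : tmap x = i := hx2
                have : y ≤ c i := by
                  rw [← hy, ← hi]; exact hφ x
                exact mul_le_mul_left this _
          _ = c i * ∑ y ∈ φ.range, μ (φ ⁻¹' {y} ∩ tmap ⁻¹' {i}) := by rw [Finset.mul_sum]
          _ ≤ c i * μ (tmap ⁻¹' {i}) := by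
              refine mul_le_mul_right ?_ (c i)
              refine sum_measure_inter_le μ φ.range (fun y => φ ⁻¹' {y})
                (fun y => φ.measurableSet_fiber y) (fun a b hab => ?_) (tmap ⁻¹' {i})
              refine Set.disjoint_left.mpr fun x hxa hxb => hab ?_
              have h1 : φ x = a := hxa
              have h2 : φ x = b := hxb
              rw [← h1, ← h2]

/-! ### Identifying cylinder sets -/

lemma preimage_eq_mcyl (T : ℕ) (v : Fin T → MInter A O R) :
    (fun ω : MInf A O R => (fun k : Fin T => ω k.1)) ⁻¹' {v} = mcyl (List.ofFn v) := by
  ext ω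
  simp only [Set.mem_preimage, Set.mem_singleton_iff, mcyl, Set.mem_setOf_eq]
  constructor
  · intro he k
    rw [List.get_ofFn]
    have := congrFun he (Fin.cast (List.length_ofFn (f := v)) k)
    simpa using this
  · intro hc
    funext k
    have := hc (Fin.cast (List.length_ofFn (f := v)).symm k)
    rw [List.get_ofFn] at this
    simpa using this

/-! ### Splitting histories into blocks -/

def spliceE (t m'' : ℕ) :
    ((Fin t → MInter A O R) × (Fin m'' → MInter A O R)) ≃ (Fin (t + m'') → MInter A O R) where
  toFun p k := if h : (k : ℕ) < t then p.1 ⟨k, h⟩ else p.2 ⟨(k : ℕ) - t, by omega⟩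
  invFun v := (fun k => v ⟨k, by omega⟩, fun k => v ⟨t + k, by omega⟩)
  left_inv p := by
    refine Prod.ext (funext fun k => ?_) (funext fun k => ?_)
    · show (if h : (k : ℕ) < t then p.1 ⟨(k : ℕ), h⟩ else p.2 ⟨(k : ℕ) - t, by omega⟩) = p.1 k
      rw [dif_pos k.2, Fin.eta]
    · show (if h : t + (k : ℕ) < t then p.1 ⟨t + (k : ℕ), h⟩
          else p.2 ⟨t + (k : ℕ) - t, by omega⟩) = p.2 k
      rw [dif_neg (by omega)]
      refine congrArg p.2 (Fin.ext ?_)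
      show t + (k : ℕ) - t = (k : ℕ)
      omega
  right_inv v := by
    funext k
    show (if h : (k : ℕ) < t then v ⟨(k : ℕ), by omega⟩
        else v ⟨t + ((k : ℕ) - t), by omega⟩) = v k
    by_cases h : (k : ℕ) < t
    · rw [dif_pos h, Fin.eta]
    · rw [dif_neg h]
      refine congrArg v (Fin.ext ?_)
      show t + ((k : ℕ) - t) = (k : ℕ)
      omega

lemma spliceE_fst (t m'' : ℕ) (p : (Fin t → MInter A O R) × (Fin m'' → MInter A O R)) :
    (fun k : Fin t => spliceE t m'' p ⟨k.1, by omega⟩) = p.1 :=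
  congrArg Prod.fst ((spliceE t m'').left_inv p)

lemma spliceE_snd (t m'' : ℕ) (p : (Fin t → MInter A O R) × (Fin m'' → MInter A O R)) :
    (fun k : Fin m'' => spliceE t m'' p ⟨t + k.1, by omega⟩) = p.2 :=
  congrArg Prod.snd ((spliceE t m'').left_inv p)

lemma ofFn_spliceE (t m'' : ℕ) (g : Fin t → MInter A O R) (f : Fin m'' → MInter A O R) :
    List.ofFn (spliceE t m'' (g, f)) = List.ofFn g ++ List.ofFn f := by
  refine List.ext_getElem (by simp) ?_
  intro n h1 h2
  have hn : n < t + m'' := by simpa using h1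
  rw [List.getElem_ofFn, List.getElem_append]
  show (if h : n < t then g ⟨n, h⟩ else f ⟨n - t, by omega⟩) = _
  by_cases h : n < t
  · rw [dif_pos h, dif_pos (show n < (List.ofFn g).length by simpa using h),
      List.getElem_ofFn]
  · rw [dif_neg h, dif_neg (show ¬ n < (List.ofFn g).length by simpa using h),
      List.getElem_ofFn]
    refine congrArg f (Fin.ext ?_)
    show n - t = n - (List.ofFn g).length
    simp

/-! ### Level sums and the telescoping chain -/

noncomputable def EDlev (wE : ι → ℝ≥0∞) (νs : ι → MEnv A O R) (wP : κ → ℝ≥0∞)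
    (πs : κ → MPolicy A O R) (β : MHist A O R → ℝ) (πstar : MPolicy A O R) (T : ℕ) :
    ℝ≥0∞ :=
  ∑' v : Fin T → MInter A O R, Qm wE νs wP πs β πstar (List.ofFn v) *
    ENNReal.ofReal (Dre wE νs wP πs (List.ofFn v))

noncomputable def Glev (wE : ι → ℝ≥0∞) (νs : ι → MEnv A O R) (wP : κ → ℝ≥0∞)
    (πs : κ → MPolicy A O R) (β : MHist A O R → ℝ) (πstar : MPolicy A O R) (t m'' : ℕ) :
    ℝ≥0∞ :=
  ∑' v : Fin (t + m'') → MInter A O R,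
    ENNReal.ofReal (IG wE νs wP πs (List.ofFn fun k : Fin t => v ⟨k.1, by omega⟩)
      (List.ofFn fun k : Fin m'' => v ⟨t + k.1, by omega⟩)) *
      Qm wE νs wP πs β πstar (List.ofFn v)

lemma EDG_step (hwE : ∑' i, wE i = 1) (hνs : ∀ i, IsMEnv (νs i))
    (hwP : ∑' j, wP j = 1) (hπs : ∀ j, IsMPolicy (πs j))
    (hβ01 : ∀ g, β g ∈ Set.Icc (0:ℝ) 1) (hstar : IsMPolicy πstar) (t m'' : ℕ) :
    EDlev wE νs wP πs β πstar t + Glev wE νs wP πs β πstar t m''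
      ≤ EDlev wE νs wP πs β πstar (t + m'') := by
  have hsplitED : EDlev wE νs wP πs β πstar (t + m'')
      = ∑' (g : Fin t → MInter A O R) (f : Fin m'' → MInter A O R),
          Qm wE νs wP πs β πstar (List.ofFn g ++ List.ofFn f) *
            ENNReal.ofReal (Dre wE νs wP πs (List.ofFn g ++ List.ofFn f)) := by
    rw [EDlev, ← Equiv.tsum_eq (spliceE t m''), ENNReal.tsum_prod']
    exact tsum_congr fun g => tsum_congr fun f => by rw [ofFn_spliceE]
  have hsplitG : Glev wE νs wP πs β πstar t m''
      = ∑' (g : Fin t → MInter A O R) (f : Fin m'' → MInter A O R),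
          Qm wE νs wP πs β πstar (List.ofFn g ++ List.ofFn f) *
            ENNReal.ofReal (IG wE νs wP πs (List.ofFn g) (List.ofFn f)) := by
    rw [Glev, ← Equiv.tsum_eq (spliceE t m''), ENNReal.tsum_prod']
    refine tsum_congr fun g => tsum_congr fun f => ?_
    rw [ofFn_spliceE, mul_comm]
    have e1 : (List.ofFn fun k : Fin t => spliceE t m'' (g, f) ⟨k.1, by omega⟩)
        = List.ofFn g := congrArg List.ofFn (spliceE_fst t m'' (g, f))
    have e2 : (List.ofFn fun k : Fin m'' => spliceE t m'' (g, f) ⟨t + k.1, by omega⟩)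
        = List.ofFn f := congrArg List.ofFn (spliceE_snd t m'' (g, f))
    rw [e1, e2]
  rw [hsplitED, hsplitG, EDlev, ← ENNReal.tsum_add]
  exact ENNReal.tsum_le_tsum fun g => block_key hwE hνs hwP hπs hβ01 hstar m'' (List.ofFn g)

lemma ED_chain (hwE : ∑' i, wE i = 1) (hνs : ∀ i, IsMEnv (νs i))
    (hwP : ∑' j, wP j = 1) (hπs : ∀ j, IsMPolicy (πs j))
    (hβ01 : ∀ g, β g ∈ Set.Icc (0:ℝ) 1) (hstar : IsMPolicy πstar) (m'' i' : ℕ) (N : ℕ) :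
    EDlev wE νs wP πs β πstar i' +
      (∑ n ∈ Finset.range N, Glev wE νs wP πs β πstar (m'' * n + i') m'')
      ≤ EDlev wE νs wP πs β πstar (m'' * N + i') := by
  induction N with
  | zero =>
    rw [show m'' * 0 + i' = i' by ring]
    simp
  | succ N ih =>
    rw [Finset.sum_range_succ, ← add_assoc]
    calc EDlev wE νs wP πs β πstar i' +
          (∑ n ∈ Finset.range N, Glev wE νs wP πs β πstar (m'' * n + i') m'') +
          Glev wE νs wP πs β πstar (m'' * N + i') m''
        ≤ EDlev wE νs wP πs β πstar (m'' * N + i') +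
            Glev wE νs wP πs β πstar (m'' * N + i') m'' := add_le_add_left ih _
      _ ≤ EDlev wE νs wP πs β πstar (m'' * N + i' + m'') :=
          EDG_step hwE hνs hwP hπs hβ01 hstar _ m''
      _ = EDlev wE νs wP πs β πstar (m'' * (N + 1) + i') :=
          congrArg (EDlev wE νs wP πs β πstar) (by ring)

lemma tsum_Glev_le (hwE : ∑' i, wE i = 1) (hνs : ∀ i, IsMEnv (νs i))
    (hwP : ∑' j, wP j = 1) (hπs : ∀ j, IsMPolicy (πs j))
    (hβ01 : ∀ g, β g ∈ Set.Icc (0:ℝ) 1) (hstar : IsMPolicy πstar)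
    (hent : FiniteEntropy wE wP) (m'' i' : ℕ) :
    (∑' n : ℕ, Glev wE νs wP πs β πstar (m'' * n + i') m'')
      ≤ ENNReal.ofReal (priorEnt wE wP) := by
  rw [ENNReal.tsum_eq_iSup_sum]
  refine iSup_le fun s => ?_
  obtain ⟨N, hN⟩ := s.exists_nat_subset_range
  calc (∑ n ∈ s, Glev wE νs wP πs β πstar (m'' * n + i') m'')
      ≤ ∑ n ∈ Finset.range N, Glev wE νs wP πs β πstar (m'' * n + i') m'' :=
        Finset.sum_le_sum_of_subset hN
    _ ≤ EDlev wE νs wP πs β πstar i' +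
          ∑ n ∈ Finset.range N, Glev wE νs wP πs β πstar (m'' * n + i') m'' := le_add_self
    _ ≤ EDlev wE νs wP πs β πstar (m'' * N + i') :=
        ED_chain hwE hνs hwP hπs hβ01 hstar m'' i' N
    _ ≤ ENNReal.ofReal (priorEnt wE wP) :=
        ED_le_ent hwE hνs hwP hπs hβ01 hstar hent _

end Aux

end Mentee

namespace Mentee

/-- **Cumulative information gain is bounded by prior entropy.** Under the measure in
which explore-step actions follow the mixture `π̄`, exploit-step actions follow an
arbitrary policy `π^*`, and percepts follow the mixture `ξ`, the expected total
information gain over disjoint blocks of length `m` at offset `i < m` is at most the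
entropy of the prior. -/
theorem cumulative_information_gain_le_entropy
    {A O R ι κ : Type} [Fintype A] [Fintype O] [Countable R] [Countable ι] [Countable κ]
    [MeasurableSpace A] [MeasurableSpace O] [MeasurableSpace R]
    (wE : ι → ℝ≥0∞) (wP : κ → ℝ≥0∞) (hwE : ∑' i : ι, wE i = 1) (hwP : ∑' j : κ, wP j = 1)
    (νs : ι → MEnv A O R) (hνs : ∀ i, IsMEnv (νs i))
    (πs : κ → MPolicy A O R) (hπs : ∀ j, IsMPolicy (πs j))
    (iμ : ι) (hiμ : wE iμ ≠ 0) (jh : κ) (hjh : wP jh ≠ 0)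
    (hent : FiniteEntropy wE wP)
    (β : MHist A O R → ℝ) (hβ : ∀ h, β h ∈ Set.Icc (0:ℝ) 1)
    (πstar : MPolicy A O R) (hstar0 : IsMPolicy πstar)
    (P : Measure (MInf A O R))
    (hP : IsMInduced P β (pibar wP πs) πstar (xi wE νs))
    (m : ℕ) (hm : 0 < m) (i : ℕ) (hi : i < m) :
    ∑' n : ℕ, ∫⁻ ω, ENNReal.ofReal
        (IG wE νs wP πs (mhist ω (m * n + i))
          (List.ofFn fun k : Fin m => ω (m * n + i + k.1))) ∂P
      ≤ ENNReal.ofReal (priorEnt wE wP) := by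
  obtain ⟨hPprob, hPcyl⟩ := hP
  refine le_trans (ENNReal.tsum_le_tsum fun n => ?_)
    (tsum_Glev_le hwE hνs hwP hπs hβ hstar0 hent m i)
  have hle := lintegral_classify P
    (fun ω : MInf A O R => (fun k : Fin (m * n + i + m) => ω k.1))
    (fun v : Fin (m * n + i + m) → MInter A O R =>
      ENNReal.ofReal (IG wE νs wP πs
        (List.ofFn fun k : Fin (m * n + i) => v ⟨k.1, by omega⟩)
        (List.ofFn fun k : Fin m => v ⟨m * n + i + k.1, by omega⟩)))
  have hmeas : ∀ v : Fin (m * n + i + m) → MInter A O R,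
      P ((fun ω : MInf A O R => (fun k : Fin (m * n + i + m) => ω k.1)) ⁻¹' {v})
        = Qm wE νs wP πs β πstar (List.ofFn v) := by
    intro v
    rw [preimage_eq_mcyl, hPcyl]
    rfl
  calc (∫⁻ ω, ENNReal.ofReal (IG wE νs wP πs (mhist ω (m * n + i))
        (List.ofFn fun k : Fin m => ω (m * n + i + k.1))) ∂P)
      = ∫⁻ ω, (fun v : Fin (m * n + i + m) → MInter A O R =>
          ENNReal.ofReal (IG wE νs wP πs
            (List.ofFn fun k : Fin (m * n + i) => v ⟨k.1, by omega⟩)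
            (List.ofFn fun k : Fin m => v ⟨m * n + i + k.1, by omega⟩)))
          ((fun k : Fin (m * n + i + m) => ω k.1)) ∂P := rfl
    _ ≤ ∑' v : Fin (m * n + i + m) → MInter A O R,
          ENNReal.ofReal (IG wE νs wP πs
            (List.ofFn fun k : Fin (m * n + i) => v ⟨k.1, by omega⟩)
            (List.ofFn fun k : Fin m => v ⟨m * n + i + k.1, by omega⟩)) *
          P ((fun ω : MInf A O R => (fun k : Fin (m * n + i + m) => ω k.1)) ⁻¹' {v}) := hle
    _ = Glev wE νs wP πs β πstar (m * n + i) m := by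
        rw [Glev]
        refine tsum_congr fun v => ?_
        rw [hmeas v]

end Mentee
end

section
/- Bayes-optimal exploration is initially worthwhile: In the environment class {ν_i : i ∈ ℕ ∪ {∞}} with prior w(ν_∞) = 1/2 and w(ν_i) = 1/(2(i+1)(i+2)) for i ∈ ℕ, and discount factor γ = 0.9, the policy π_{{0}} (take action 1 at t = 0; if a reward of 1 is ever received always take action 1 thereafter, otherwise take action 0) has Bayes value ∑_{i ∈ ℕ∪{∞}} w(ν_i)·V^{π_{{0}}}_{ν_i} = w(ν_0)·1 + (1 − w(ν_0))·(1−γ)·∑_{t=1}^∞ γ^t·0.5 = 0.25 + 0.75·0.9·0.5 = 0.5875, which strictly exceeds the Bayes value 0.5 = ∑_{i ∈ ℕ∪{∞}} w(ν_i)·V^{π_∅}_{ν_i} of the never-exploring policy π_∅ (always take action 0). -/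
open scoped Classical

namespace BayesExplore

/-- In environment `ν_i` (where `i = some j` for `j ∈ ℕ` and `i = none` stands for `ν_∞`),
the arm `1` is "active" at time `s` iff `i = some j` with `j ≤ s` (action 1 then pays 1). -/
def active (i : Option ℕ) (s : ℕ) : Prop := ∃ j : ℕ, i = some j ∧ j ≤ s

/-- The reward received at time `t` by the policy `π_S` (take action 1 at times in `S`,
take action 1 forever after ever receiving reward 1, otherwise take action 0) in the
deterministic environment `ν_i`: action 0 yields `1/2`; action 1 yields `1` if `t ≥ i`
and `0` otherwise. -/
noncomputable def rew (S : Set ℕ) (i : Option ℕ) (t : ℕ) : ℝ :=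
  if ∃ s ∈ S, s < t ∧ active i s then 1
  else if t ∈ S then (if active i t then 1 else 0)
  else 1 / 2

/-- Discounted value from time `n`: `V = (1-γ) ∑_{k≥0} γ^k r_{n+k}`. -/
noncomputable def valS (γ : ℝ) (S : Set ℕ) (i : Option ℕ) (n : ℕ) : ℝ :=
  (1 - γ) * ∑' k : ℕ, γ ^ k * rew S i (n + k)

/-- The prior: `w(ν_∞) = 1/2` and `w(ν_i) = 1/(2(i+1)(i+2))`. -/
noncomputable def w0 : Option ℕ → ℝ
  | none => 1 / 2
  | some i => 1 / (2 * ((i : ℝ) + 1) * ((i : ℝ) + 2))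

/-- The Bayes value of the policy `π_S` from the start. -/
noncomputable def bayesVal (γ : ℝ) (S : Set ℕ) : ℝ :=
  ∑' i : Option ℕ, w0 i * valS γ S i 0

/-! ### Auxiliary lemmas -/

lemma active_some0 (s : ℕ) : active (some 0) s := ⟨0, rfl, Nat.zero_le s⟩

lemma not_active_zero {i : Option ℕ} (h : i ≠ some 0) : ¬ active i 0 := by
  rintro ⟨j, rfl, hj⟩
  exact h (by simpa using Nat.le_zero.mp hj)

lemma rew_empty (i : Option ℕ) (t : ℕ) : rew ∅ i t = 1 / 2 := by
  simp [rew]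

lemma rew_zero_some0 (t : ℕ) : rew {0} (some 0) t = 1 := by
  cases t with
  | zero =>
    have h1 : ¬ ∃ s ∈ ({0} : Set ℕ), s < 0 ∧ active (some 0) s := by
      rintro ⟨s, _, hs, _⟩; omega
    simp [rew, h1, active_some0]
  | succ n =>
    have h1 : ∃ s ∈ ({0} : Set ℕ), s < n + 1 ∧ active (some 0) s :=
      ⟨0, rfl, Nat.succ_pos n, active_some0 0⟩
    unfold rew
    rw [if_pos h1]

lemma rew_zero_other {i : Option ℕ} (h : i ≠ some 0) (t : ℕ) :
    rew {0} i t = if t = 0 then 0 else 1 / 2 := by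
  have h1 : ¬ ∃ s ∈ ({0} : Set ℕ), s < t ∧ active i s := by
    rintro ⟨s, hs, _, ha⟩
    rw [Set.mem_singleton_iff] at hs
    subst hs
    exact not_active_zero h ha
  rcases eq_or_ne t 0 with rfl | ht
  · unfold rew
    rw [if_neg h1, if_pos (Set.mem_singleton 0), if_neg (not_active_zero h)]
    simp
  · have h2 : t ∉ ({0} : Set ℕ) := by simpa using ht
    unfold rew
    rw [if_neg h1, if_neg h2, if_neg ht]

lemma hgeo : HasSum (fun k : ℕ => (0.9 : ℝ) ^ k) 10 := by
  have := hasSum_geometric_of_lt_one (by norm_num : (0 : ℝ) ≤ 0.9) (by norm_num : (0.9 : ℝ) < 1)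
  convert this using 1
  norm_num

lemma valS_zero_some0 : valS 0.9 {0} (some 0) 0 = 1 := by
  have h : (fun k : ℕ => (0.9 : ℝ) ^ k * rew {0} (some 0) (0 + k))
      = fun k : ℕ => (0.9 : ℝ) ^ k := by
    funext k; rw [zero_add, rew_zero_some0, mul_one]
  rw [valS, h, hgeo.tsum_eq]
  norm_num

lemma valS_zero_other {i : Option ℕ} (h : i ≠ some 0) : valS 0.9 {0} i 0 = 0.45 := by
  have hs : HasSum (fun k : ℕ => (0.9 : ℝ) ^ k * rew {0} i (0 + k)) 4.5 := by
    have h1 : HasSum (fun k : ℕ => (0.9 : ℝ) ^ k * (1 / 2)) 5 := by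
      have := hgeo.mul_right (1 / 2)
      convert this using 1
      · rfl
      norm_num
    have h2 : HasSum (fun k : ℕ => if k = 0 then (1 / 2 : ℝ) else 0) (1 / 2) :=
      hasSum_ite_eq 0 (1 / 2)
    have := h1.sub h2
    convert this using 1
    · rfl
    · funext k
      rw [zero_add, rew_zero_other h]
      rcases eq_or_ne k 0 with rfl | hk
      · simp
      · simp [hk]
    · norm_num
  rw [valS, hs.tsum_eq]
  norm_num

lemma valS_empty (i : Option ℕ) : valS 0.9 ∅ i 0 = 1 / 2 := by
  have hs : HasSum (fun k : ℕ => (0.9 : ℝ) ^ k * rew ∅ i (0 + k)) 5 := by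
    have := hgeo.mul_right (1 / 2)
    convert this using 1
    · rfl
    · funext k; rw [rew_empty]
    · norm_num
  rw [valS, hs.tsum_eq]
  norm_num

lemma w0_some (j : ℕ) : w0 (some j) = (1 / 2) * (1 / ((j : ℝ) + 1)) - (1 / 2) * (1 / ((j : ℝ) + 2)) := by
  have h1 : ((j : ℝ) + 1) ≠ 0 := by positivity
  have h2 : ((j : ℝ) + 2) ≠ 0 := by positivity
  show (1 : ℝ) / (2 * ((j : ℝ) + 1) * ((j : ℝ) + 2)) = _
  field_simp
  ring

lemma hW : HasSum (fun j : ℕ => w0 (some j)) (1 / 2) := by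
  have hnn : ∀ j : ℕ, 0 ≤ w0 (some j) := by
    intro j
    show (0 : ℝ) ≤ 1 / (2 * ((j : ℝ) + 1) * ((j : ℝ) + 2))
    positivity
  rw [hasSum_iff_tendsto_nat_of_nonneg hnn]
  have hsum : ∀ n : ℕ, ∑ j ∈ Finset.range n, w0 (some j)
      = (1 / 2 : ℝ) - (1 / 2) * (1 / ((n : ℝ) + 1)) := by
    intro n
    have key := Finset.sum_range_sub' (fun j : ℕ => (1 / 2 : ℝ) * (1 / ((j : ℝ) + 1))) n
    have hptw : ∀ j : ℕ, w0 (some j)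
        = (fun j : ℕ => (1 / 2 : ℝ) * (1 / ((j : ℝ) + 1))) j
          - (fun j : ℕ => (1 / 2 : ℝ) * (1 / ((j : ℝ) + 1))) (j + 1) := by
      intro j
      simp only []
      rw [w0_some j]
      push_cast
      ring
    rw [Finset.sum_congr rfl (fun j _ => hptw j), key]
    norm_num
  have : Filter.Tendsto (fun n : ℕ => (1 / 2 : ℝ) - (1 / 2) * (1 / ((n : ℝ) + 1)))
      Filter.atTop (nhds (1 / 2)) := by
    have h0 := tendsto_one_div_add_atTop_nhds_zero_nat (𝕜 := ℝ)
    have := h0.const_mul (1 / 2 : ℝ)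
    have := (tendsto_const_nhds (x := (1 / 2 : ℝ)) (f := Filter.atTop)).sub this
    simpa using this
  exact (Filter.Tendsto.congr (fun n => (hsum n).symm)) this

/-- `ℕ ≃ Option ℕ` sending `0 ↦ none`, `n+1 ↦ some n`. -/
def optEquiv : ℕ ≃ Option ℕ where
  toFun n := match n with
    | 0 => none
    | n + 1 => some n
  invFun o := o.elim 0 (· + 1)
  left_inv n := by cases n <;> rfl
  right_inv o := by cases o <;> rfl

/-- The prior viewed on `ℕ` through `optEquiv`. -/
noncomputable def W : ℕ → ℝ := fun n => w0 (optEquiv n)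

lemma hWfull : HasSum W 1 := by
  have h1 : HasSum (fun n : ℕ => W (n + 1)) (1 / 2) := hW
  have := (hasSum_nat_add_iff (f := W) 1).mp h1
  have hW0 : ∑ i ∈ Finset.range 1, W i = 1 / 2 := by
    simp [W, optEquiv, w0]
  rw [hW0] at this
  norm_num at this
  exact this

lemma w0_some0 : w0 (some 0) = 1 / 4 := by
  show (1 : ℝ) / (2 * ((0 : ℕ) + 1 : ℝ) * ((0 : ℕ) + 2 : ℝ)) = 1 / 4
  norm_num

lemma hBayes_explore : HasSum (fun i : Option ℕ => w0 i * valS 0.9 {0} i 0) 0.5875 := by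
  rw [← Equiv.hasSum_iff optEquiv]
  have h1 : HasSum (fun n : ℕ => (0.45 : ℝ) * W n) (0.45 * 1) := hWfull.mul_left 0.45
  have h2 : HasSum (fun n : ℕ => if n = 1 then (0.55 : ℝ) * (1 / 4) else 0) (0.55 * (1 / 4)) :=
    hasSum_ite_eq 1 _
  have := h1.add h2
  convert this using 1
  · funext n
    show w0 (optEquiv n) * valS 0.9 {0} (optEquiv n) 0 = _
    match n with
    | 0 =>
      have : (optEquiv 0 : Option ℕ) = none := rfl
      rw [this, valS_zero_other (by simp)]
      simp [W, optEquiv, w0]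
      norm_num
    | 1 =>
      have : (optEquiv 1 : Option ℕ) = some 0 := rfl
      rw [this, valS_zero_some0]
      simp [W, optEquiv, w0_some0]
      norm_num
    | (m + 2) =>
      have he : (optEquiv (m + 2) : Option ℕ) = some (m + 1) := rfl
      rw [he, valS_zero_other (by simp)]
      simp only [W, he]
      have : m + 2 ≠ 1 := by omega
      rw [if_neg this]
      ring
  · norm_num

lemma hBayes_empty : HasSum (fun i : Option ℕ => w0 i * valS 0.9 ∅ i 0) 0.5 := by
  rw [← Equiv.hasSum_iff optEquiv]
  have h1 : HasSum (fun n : ℕ => W n * (1 / 2 : ℝ)) (1 * (1 / 2)) := hWfull.mul_right _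
  convert h1 using 1
  · funext n
    show w0 (optEquiv n) * valS 0.9 ∅ (optEquiv n) 0 = _
    rw [valS_empty]
    rfl
  · norm_num

lemma htail : (∑' t : ℕ, (0.9 : ℝ) ^ (t + 1) * 0.5) = 4.5 := by
  have : HasSum (fun t : ℕ => (0.9 : ℝ) ^ (t + 1) * 0.5) 4.5 := by
    have := hgeo.mul_left (0.9 * 0.5)
    convert this using 1
    · rfl
    · funext t; ring
    · norm_num
  exact this.tsum_eq

/-- **Bayes-optimal exploration is initially worthwhile.** With discount `γ = 0.9`, the
Bayes value of the exploring policy `π_{{0}}` equals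
`w(ν_0)·1 + (1 − w(ν_0))·(1−γ)·∑_{t≥1} γ^t·0.5 = 0.5875`, which strictly exceeds the
Bayes value `0.5` of the never-exploring policy `π_∅`. -/
theorem exploring_initially_worthwhile :
    bayesVal 0.9 {0}
      = w0 (some 0) * 1
        + (1 - w0 (some 0)) * ((1 - 0.9) * ∑' t : ℕ, (0.9 : ℝ) ^ (t + 1) * 0.5) ∧
    bayesVal 0.9 {0} = 0.5875 ∧
    bayesVal 0.9 ∅ = 0.5 ∧
    bayesVal 0.9 ∅ < bayesVal 0.9 {0} := by
  have he : bayesVal 0.9 {0} = 0.5875 := hBayes_explore.tsum_eq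
  have h0 : bayesVal 0.9 ∅ = 0.5 := hBayes_empty.tsum_eq
  refine ⟨?_, he, h0, by rw [he, h0]; norm_num⟩
  rw [he, htail, w0_some0]
  norm_num

end BayesExplore
end

section
/- Bayes-optimal exploration eventually stops: In the environment class {ν_i : i ∈ ℕ ∪ {∞}} with prior w(ν_∞) = 1/2, w(ν_i) = 1/(2(i+1)(i+2)), and discount factor γ = 0.9, consider a history h_{<n} (n > 100) in which action 1 was taken at t = 100 yielding reward 0 and action 0 was taken at all other timesteps up to n−1. Then the posterior satisfies w(ν_∞ | h_{<n}) = 102/103 and w(ν_i | h_{<n}) = (204/103)·(1/(2(i+1)(i+2))) for i > 100, and for any S ∋ 100 consistent with this history, the posterior Bayes value of exploring once more satisfies ∑_{i ∈ ℕ∪{∞}} w(ν_i | h_{<n})·V^{π_{S∪{n}}}_{ν_i}(h_{<n}) ≤ (102/103)·(0.5·0.9) + 1/103 < 0.5 = ∑_{i ∈ ℕ∪{∞}} w(ν_i | h_{<n})·V^{π_S}_{ν_i}(h_{<n}); hence taking action 1 at time n is Bayes-worse than never exploring again. -/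
open scoped Classical

namespace BayesExplore

/-- The reward environment `ν_i` produces at time `t` on action `a` (`a = true` is
action 1): action 0 yields `1/2`; action 1 yields `1` if `t ≥ i` and `0` otherwise. -/
noncomputable def envRew (i : Option ℕ) (a : Bool) (t : ℕ) : ℝ :=
  if a then (if active i t then 1 else 0) else 1 / 2

/-- Likelihood of the history `h_{<n}` in which action 1 was taken at `t = 100` yielding
reward 0 and action 0 was taken at all other timesteps `t < n` (deterministic
environments: 1 if consistent, 0 otherwise). -/
noncomputable def lik (i : Option ℕ) (n : ℕ) : ℝ :=
  if ∀ t < n, envRew i (decide (t = 100)) t = (if t = 100 then 0 else 1 / 2) then 1 else 0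

/-- Posterior weight of `ν_i` by Bayes' rule after the history `h_{<n}`. -/
noncomputable def postw (n : ℕ) (i : Option ℕ) : ℝ :=
  w0 i * lik i n / ∑' j : Option ℕ, w0 j * lik j n

-- auxiliary lemmas

lemma hasSum_option' {f : Option ℕ → ℝ} {a : ℝ}
    (h : HasSum (fun j : ℕ => f (some j)) a) : HasSum f (f none + a) := by
  have h1 : HasSum (fun i : Option ℕ => if i = none then f none else 0) (f none) :=
    hasSum_ite_eq none (f none)
  have h2 : HasSum (fun i : Option ℕ => if i = none then 0 else f i) a := by
    refine (Function.Injective.hasSum_iff (Option.some_injective ℕ) ?_).1 ?_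
    · intro x hx
      have : x = none := by
        cases x with
        | none => rfl
        | some j => exact absurd ⟨j, rfl⟩ hx
      simp [this]
    · simpa [Function.comp_def] using h
  have heq : (fun i : Option ℕ =>
      (if i = none then f none else 0) + (if i = none then 0 else f i)) = f := by
    funext i; by_cases hi : i = none <;> simp [hi]
  have := h1.add h2
  rwa [heq] at this

lemma hasSum_telescope {f : ℕ → ℝ} (hmono : ∀ k, f (k + 1) ≤ f k)
    (hl : Filter.Tendsto f Filter.atTop (nhds 0)) :
    HasSum (fun k => f k - f (k + 1)) (f 0) := by
  rw [hasSum_iff_tendsto_nat_of_nonneg (fun k => sub_nonneg.2 (hmono k))]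
  have heq : (fun n => ∑ i ∈ Finset.range n, (f i - f (i + 1))) = fun n => f 0 - f n := by
    funext n; exact Finset.sum_range_sub' f n
  rw [heq]
  simpa using Filter.Tendsto.sub (tendsto_const_nhds (x := f 0)) hl

noncomputable def Fa (c : ℕ) (j : ℕ) : ℝ := 1 / (2 * ((j : ℝ) + (c : ℝ) + 1))

lemma Fa_tendsto (c : ℕ) : Filter.Tendsto (Fa c) Filter.atTop (nhds 0) := by
  have h := tendsto_one_div_add_atTop_nhds_zero_nat (𝕜 := ℝ)
  have h2 : Filter.Tendsto (fun j : ℕ => (1 / 2 : ℝ) * (1 / ((j : ℝ) + 1))) Filter.atTop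
      (nhds ((1/2 : ℝ) * 0)) := h.const_mul _
  rw [mul_zero] at h2
  refine squeeze_zero (fun j => ?_) (fun j => ?_) h2
  · unfold Fa; positivity
  · unfold Fa
    rw [show (1/2:ℝ) * (1/((j:ℝ)+1)) = 1/(2*((j:ℝ)+1)) by rw [div_mul_div_comm, one_mul]]
    apply one_div_le_one_div_of_le (by positivity)
    have hc : (0:ℝ) ≤ (c:ℝ) := Nat.cast_nonneg c
    linarith

lemma hasSum_w0_shift (c : ℕ) :
    HasSum (fun k : ℕ => w0 (some (k + c))) (1 / (2 * ((c : ℝ) + 1))) := by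
  have hmono : ∀ k, Fa c (k + 1) ≤ Fa c k := by
    intro k; unfold Fa
    apply div_le_div_of_nonneg_left (by norm_num) (by positivity)
    push_cast; linarith
  have h := hasSum_telescope hmono (Fa_tendsto c)
  have heq : (fun k => Fa c k - Fa c (k + 1)) = fun k : ℕ => w0 (some (k + c)) := by
    funext k
    show Fa c k - Fa c (k+1) = 1 / (2 * (((k + c : ℕ) : ℝ) + 1) * (((k + c : ℕ) : ℝ) + 2))
    unfold Fa
    push_cast
    have h1 : (2 * ((k:ℝ) + (c:ℝ) + 1)) ≠ 0 := by positivity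
    have h2 : (2 * ((k:ℝ) + 1 + (c:ℝ) + 1)) ≠ 0 := by positivity
    have h3 : (2 * ((k:ℝ) + (c:ℝ) + 1) * ((k:ℝ) + (c:ℝ) + 2)) ≠ 0 := by positivity
    field_simp
    ring
  have hF0 : Fa c 0 = 1 / (2 * ((c : ℝ) + 1)) := by unfold Fa; norm_num
  rw [heq, hF0] at h
  exact h


lemma active_none (s : ℕ) : ¬ active none s := by simp [active]

lemma active_some (j s : ℕ) : active (some j) s ↔ j ≤ s := by simp [active]

lemma lik_eval {i : Option ℕ} {n : ℕ} (hn : 100 < n) :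
    lik i n = if active i 100 then 0 else 1 := by
  unfold lik
  by_cases ha : active i 100
  · rw [if_pos ha, if_neg]
    intro hall
    have := hall 100 hn
    simp [envRew, ha] at this
  · rw [if_neg ha, if_pos]
    intro t ht
    by_cases h100 : t = 100
    · subst h100; simp [envRew, ha]
    · simp [envRew, h100]

lemma lik_none {n : ℕ} (hn : 100 < n) : lik none n = 1 := by
  rw [lik_eval hn, if_neg (active_none 100)]

lemma lik_some {j n : ℕ} (hn : 100 < n) : lik (some j) n = if 100 < j then 1 else 0 := by
  rw [lik_eval hn, active_some]
  by_cases h : j ≤ 100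
  · rw [if_pos h, if_neg (by omega)]
  · rw [if_neg h, if_pos (by omega)]

lemma hasSum_Lsome {n : ℕ} (hn : 100 < n) :
    HasSum (fun j : ℕ => w0 (some j) * lik (some j) n) (1 / 204) := by
  have heq : (fun j : ℕ => w0 (some j) * lik (some j) n)
      = fun j : ℕ => if 100 < j then w0 (some j) else 0 := by
    funext j
    rw [lik_some hn]
    by_cases h : 100 < j <;> simp [h]
  rw [heq]
  have hinj : Function.Injective (fun k : ℕ => k + 101) := add_left_injective 101
  refine (Function.Injective.hasSum_iff hinj ?_).1 ?_
  · intro x hx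
    have hxle : ¬ 100 < x := by
      intro hgt
      exact hx ⟨x - 101, show x - 101 + 101 = x by omega⟩
    simp [hxle]
  · have h := hasSum_w0_shift 101
    have : (fun k : ℕ => (if 100 < k + 101 then w0 (some (k + 101)) else 0))
        = fun k : ℕ => w0 (some (k + 101)) := by
      funext k; rw [if_pos (by omega)]
    rw [Function.comp_def]
    simp only [this]
    convert h using 2
    norm_num

lemma hasSum_Z {n : ℕ} (hn : 100 < n) :
    HasSum (fun i : Option ℕ => w0 i * lik i n) (103 / 204) := by
  convert hasSum_option' (f := fun i : Option ℕ => w0 i * lik i n) (hasSum_Lsome hn) using 1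
  show (103/204 : ℝ) = w0 none * lik none n + 1/204
  rw [lik_none hn]
  norm_num [w0]

lemma Z_eq {n : ℕ} (hn : 100 < n) : (∑' j : Option ℕ, w0 j * lik j n) = 103 / 204 :=
  (hasSum_Z hn).tsum_eq

lemma postw_eq {n : ℕ} (hn : 100 < n) (i : Option ℕ) :
    postw n i = (204 / 103) * (w0 i * lik i n) := by
  rw [postw, Z_eq hn]
  ring

lemma postw_nonneg {n : ℕ} (hn : 100 < n) (i : Option ℕ) : 0 ≤ postw n i := by
  rw [postw_eq hn]
  have h0 : 0 ≤ w0 i := by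
    cases i with
    | none => norm_num [w0]
    | some j => unfold w0; positivity
  have h1 : 0 ≤ lik i n := by unfold lik; split <;> norm_num
  positivity

lemma hasSum_postw_some {n : ℕ} (hn : 100 < n) :
    HasSum (fun j : ℕ => postw n (some j)) (1 / 103) := by
  have h := (hasSum_Lsome hn).mul_left (204 / 103)
  have : (204 / 103 : ℝ) * (1 / 204) = 1 / 103 := by norm_num
  rw [this] at h
  have heq : (fun j : ℕ => postw n (some j))
      = fun j : ℕ => 204 / 103 * (w0 (some j) * lik (some j) n) :=
    funext fun j => postw_eq hn (some j)
  rw [heq]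
  exact h


lemma active_mono {i : Option ℕ} {s t : ℕ} (h : active i s) (hst : s ≤ t) : active i t := by
  obtain ⟨j, hj, hjs⟩ := h
  exact ⟨j, hj, le_trans hjs hst⟩

lemma rew_nonneg (S : Set ℕ) (i : Option ℕ) (t : ℕ) : 0 ≤ rew S i t := by
  unfold rew; split_ifs <;> norm_num

lemma rew_le_one (S : Set ℕ) (i : Option ℕ) (t : ℕ) : rew S i t ≤ 1 := by
  unfold rew; split_ifs <;> norm_num

lemma summable_val (S : Set ℕ) (i : Option ℕ) (n : ℕ) :
    Summable (fun k : ℕ => (0.9 : ℝ) ^ k * rew S i (n + k)) := by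
  refine Summable.of_nonneg_of_le (fun k => mul_nonneg (by positivity) (rew_nonneg S i (n + k)))
    (fun k => ?_) (summable_geometric_of_lt_one (r := (0.9:ℝ)) (by norm_num) (by norm_num))
  calc (0.9 : ℝ) ^ k * rew S i (n + k) ≤ (0.9 : ℝ) ^ k * 1 :=
        mul_le_mul_of_nonneg_left (rew_le_one S i (n + k)) (by positivity)
    _ = (0.9 : ℝ) ^ k := mul_one _

lemma valS_nonneg (S : Set ℕ) (i : Option ℕ) (n : ℕ) : 0 ≤ valS 0.9 S i n := by
  unfold valS
  have := tsum_nonneg (L := SummationFilter.unconditional ℕ) (fun k : ℕ => mul_nonneg (by positivity : (0:ℝ) ≤ (0.9:ℝ)^k)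
    (rew_nonneg S i (n + k)))
  nlinarith

lemma valS_le_one (S : Set ℕ) (i : Option ℕ) (n : ℕ) : valS 0.9 S i n ≤ 1 := by
  unfold valS
  have h1 : (∑' k : ℕ, (0.9:ℝ) ^ k * rew S i (n + k)) ≤ ∑' k : ℕ, (0.9:ℝ) ^ k := by
    refine Summable.tsum_le_tsum (fun k => ?_) (summable_val S i n)
      (summable_geometric_of_lt_one (by norm_num) (by norm_num))
    calc (0.9 : ℝ) ^ k * rew S i (n + k) ≤ (0.9 : ℝ) ^ k * 1 :=
          mul_le_mul_of_nonneg_left (rew_le_one S i (n + k)) (by positivity)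
      _ = (0.9 : ℝ) ^ k := mul_one _
  rw [tsum_geometric_of_lt_one (by norm_num) (by norm_num)] at h1
  norm_num at h1 ⊢
  nlinarith

lemma valS_of_const {S : Set ℕ} {i : Option ℕ} {n : ℕ} {c : ℝ}
    (h : ∀ k : ℕ, rew S i (n + k) = c) : valS 0.9 S i n = c := by
  unfold valS
  have heq : (fun k : ℕ => (0.9:ℝ) ^ k * rew S i (n + k)) = fun k => c * (0.9:ℝ) ^ k := by
    funext k; rw [h k]; ring
  rw [heq, tsum_mul_left, tsum_geometric_of_lt_one (by norm_num) (by norm_num)]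
  norm_num
  ring

lemma valS_first_zero {S : Set ℕ} {i : Option ℕ} {n : ℕ}
    (h0 : rew S i n = 0) (h : ∀ k : ℕ, rew S i (n + (k + 1)) = 1 / 2) :
    valS 0.9 S i n = 0.45 := by
  unfold valS
  have heq : (fun k : ℕ => (0.9:ℝ) ^ k * rew S i (n + k))
      = fun k : ℕ => (1 / 2) * (0.9:ℝ) ^ k - (if k = 0 then (1/2 : ℝ) else 0) := by
    funext k
    cases k with
    | zero => simp [h0]
    | succ m => rw [h m, if_neg (Nat.succ_ne_zero m)]; ring
  have hs1 : Summable (fun k : ℕ => (1 / 2 : ℝ) * (0.9:ℝ) ^ k) :=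
    (summable_geometric_of_lt_one (by norm_num) (by norm_num)).mul_left _
  have hs2 : Summable (fun k : ℕ => if k = 0 then (1/2 : ℝ) else 0) :=
    (hasSum_ite_eq 0 (1/2 : ℝ)).summable
  rw [heq, Summable.tsum_sub hs1 hs2, tsum_mul_left,
    tsum_geometric_of_lt_one (by norm_num) (by norm_num), tsum_ite_eq]
  norm_num

lemma rew_single_env {i : Option ℕ} (hi : ¬ active i 100) {t : ℕ} (ht : 100 < t) :
    rew {100} i t = 1 / 2 := by
  have h1 : ¬ ∃ s ∈ ({100} : Set ℕ), s < t ∧ active i s := by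
    rintro ⟨s, hs, _, ha⟩
    rw [Set.mem_singleton_iff] at hs; subst hs; exact hi ha
  have h2 : t ∉ ({100} : Set ℕ) := by
    rw [Set.mem_singleton_iff]; omega
  unfold rew
  rw [if_neg h1, if_neg h2]

lemma valS_single {i : Option ℕ} {n : ℕ} (hn : 100 < n) (hi : ¬ active i 100) :
    valS 0.9 {100} i n = 1 / 2 :=
  valS_of_const fun k => rew_single_env hi (by omega)

lemma rew_union_zero {i : Option ℕ} {n : ℕ} (hn : 100 < n) (hi : ¬ active i n) :
    rew ({100} ∪ {n}) i n = 0 := by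
  have h1 : ¬ ∃ s ∈ ({100} ∪ {n} : Set ℕ), s < n ∧ active i s := by
    rintro ⟨s, hs, hlt, ha⟩
    rcases hs with hs | hs <;> rw [Set.mem_singleton_iff] at hs <;> subst hs
    · exact hi (active_mono ha (by omega))
    · omega
  have h2 : n ∈ ({100} ∪ {n} : Set ℕ) := Or.inr rfl
  unfold rew
  rw [if_neg h1, if_pos h2, if_neg hi]

lemma rew_union_tail {i : Option ℕ} {n : ℕ} (hn : 100 < n) (hi : ¬ active i n) (k : ℕ) :
    rew ({100} ∪ {n}) i (n + (k + 1)) = 1 / 2 := by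
  have h1 : ¬ ∃ s ∈ ({100} ∪ {n} : Set ℕ), s < n + (k + 1) ∧ active i s := by
    rintro ⟨s, hs, hlt, ha⟩
    rcases hs with hs | hs <;> rw [Set.mem_singleton_iff] at hs <;> subst hs
    · exact hi (active_mono ha (by omega))
    · exact hi ha
  have h2 : n + (k + 1) ∉ ({100} ∪ {n} : Set ℕ) := by
    intro h
    rcases h with h | h <;> rw [Set.mem_singleton_iff] at h <;> omega
  unfold rew
  rw [if_neg h1, if_neg h2]

lemma valS_union {i : Option ℕ} {n : ℕ} (hn : 100 < n) (hi : ¬ active i n) :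
    valS 0.9 ({100} ∪ {n}) i n = 0.45 :=
  valS_first_zero (rew_union_zero hn hi) (rew_union_tail hn hi)


/-- **Bayes-optimal exploration eventually stops.** After a history `h_{<n}` (`n > 100`)
in which action 1 at `t = 100` yielded reward 0 (and action 0 was taken otherwise), the
posterior is `w(ν_∞ | h_{<n}) = 102/103` and `w(ν_i | h_{<n}) = (204/103)·(1/(2(i+1)(i+2)))`
for `i > 100`, and for any `S ∋ 100` consistent with the history (and exploring no more),
exploring once more at time `n` is Bayes-worse than never exploring again:
`∑_i w(ν_i|h_{<n}) V^{π_{S∪{n}}}_{ν_i}(h_{<n}) ≤ (102/103)(0.5·0.9) + 1/103 < 0.5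
 = ∑_i w(ν_i|h_{<n}) V^{π_S}_{ν_i}(h_{<n})`. -/
theorem exploring_eventually_stops
    (n : ℕ) (hn : 100 < n) (S : Set ℕ)
    (h100 : 100 ∈ S) (hcons : S ∩ Set.Iio n = {100}) (hpast : ∀ s ∈ S, s < n) :
    postw n none = 102 / 103 ∧
    (∀ i : ℕ, 100 < i →
      postw n (some i) = (204 / 103) * (1 / (2 * ((i : ℝ) + 1) * ((i : ℝ) + 2)))) ∧
    (∑' i : Option ℕ, postw n i * valS 0.9 (S ∪ {n}) i n)
      ≤ (102 / 103) * (0.5 * 0.9) + 1 / 103 ∧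
    (102 / 103 : ℝ) * (0.5 * 0.9) + 1 / 103 < 0.5 ∧
    (∑' i : Option ℕ, postw n i * valS 0.9 S i n) = 0.5 := by
  have hS : S = {100} := by
    have hh : S ∩ Set.Iio n = S := Set.inter_eq_left.2 fun s hs => hpast s hs
    rw [← hcons, hh]
  subst hS
  have hpnone : postw n none = 102 / 103 := by
    rw [postw_eq hn, lik_none hn]
    norm_num [w0]
  have hsum1 : HasSum (postw n) 1 := by
    have h := hasSum_option' (f := postw n) (hasSum_postw_some hn)
    rw [hpnone] at h
    norm_num at h
    exact h
  have hg : HasSum (fun i : Option ℕ => postw n i * (if i = none then (0.45 : ℝ) else 1))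
      ((102 / 103) * 0.45 + 1 / 103) := by
    have hgs : HasSum (fun j : ℕ =>
        postw n (some j) * (if (some j : Option ℕ) = none then (0.45 : ℝ) else 1)) (1 / 103) := by
      simpa using hasSum_postw_some hn
    have h := hasSum_option'
      (f := fun i : Option ℕ => postw n i * (if i = none then (0.45 : ℝ) else 1)) hgs
    simp only [if_pos rfl] at h
    rw [hpnone] at h
    exact h
  refine ⟨hpnone, ?_, ?_, by norm_num, ?_⟩
  · intro i hi
    rw [postw_eq hn, lik_some hn, if_pos hi, mul_one]
    simp [w0]
  · have hle : ∀ i : Option ℕ, postw n i * valS 0.9 ({100} ∪ {n}) i n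
        ≤ postw n i * (if i = none then (0.45 : ℝ) else 1) := by
      intro i
      cases i with
      | none =>
        rw [if_pos rfl, valS_union hn (active_none n)]
      | some j =>
        rw [if_neg (by simp)]
        calc postw n (some j) * valS 0.9 ({100} ∪ {n}) (some j) n
            ≤ postw n (some j) * 1 :=
              mul_le_mul_of_nonneg_left (valS_le_one _ _ _) (postw_nonneg hn _)
          _ = postw n (some j) * 1 := rfl
    have hsumL : Summable (fun i : Option ℕ => postw n i * valS 0.9 ({100} ∪ {n}) i n) :=
      Summable.of_nonneg_of_le
        (fun i => mul_nonneg (postw_nonneg hn i) (valS_nonneg _ _ _)) hle hg.summable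
    have h := Summable.tsum_le_tsum hle hsumL hg.summable
    rw [hg.tsum_eq] at h
    calc (∑' i : Option ℕ, postw n i * valS 0.9 ({100} ∪ {n}) i n)
        ≤ (102 / 103) * 0.45 + 1 / 103 := h
      _ = (102 / 103) * (0.5 * 0.9) + 1 / 103 := by norm_num
  · have hptw : ∀ i : Option ℕ, postw n i * valS 0.9 {100} i n = postw n i * (1 / 2) := by
      intro i
      by_cases ha : active i 100
      · rw [postw_eq hn, lik_eval hn, if_pos ha]
        ring
      · rw [valS_single hn ha]
    calc (∑' i : Option ℕ, postw n i * valS 0.9 {100} i n)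
        = ∑' i : Option ℕ, postw n i * (1 / 2) := tsum_congr hptw
      _ = (∑' i : Option ℕ, postw n i) * (1 / 2) := tsum_mul_right
      _ = 0.5 := by rw [hsum1.tsum_eq]; norm_num

end BayesExplore
end
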